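/- arXiv:math/0505069 — 6 statements merged into one kernel-verified Lean document; each statement's English description precedes it below -/
import Mathlib

section
/- Let G be a locally compact, second countable Hausdorff topological group, H ≤ G a closed subgroup, Q ≤ H a closed subgroup, and n ≥ 1. Let ι : H⧸Q → G⧸Q be the map sending hQ to hQ and p : G⧸Q → G⧸H the canonical projection. Then the map q_n : G × (H⧸Q)^n → (G⧸Q)^n defined by q_n(g, x₁, …, x_n) = (g·ι(x₁), …, g·ι(x_n)) is continuous, its image is exactly the fibered product F_n := {(y₁, …, y_n) ∈ (G⧸Q)^n : p(y₁) = ⋯ = p(y_n)}, it is constant on the orbits of the right H-action on G × (H⧸Q)^n given by (g, x₁, …, x_n)·h := (gh, h⁻¹·x₁, …, h⁻¹·x_n), and the induced map from the orbit space (G × (H⧸Q)^n)/H (with the quotient topology) onto F_n (with the subspace topology from (G⧸Q)^n) is a homeomorphism; this homeomorphism is equivariant for the G-action by left translation on the first factor of G × (H⧸Q)^n and the diagonal G-action on F_n. -/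
open scoped Pointwise

/-- Let `G` be a locally compact, second countable Hausdorff topological
group, `H ≤ G` a closed subgroup, `Q ≤ H` a closed subgroup, and `n ≥ 1`.  Let
`ι : H⧸Q → G⧸Q` be the map sending `hQ` to `hQ` and `p : G⧸Q → G⧸H` the canonical
projection.  Then the map `qₙ : G × (H⧸Q)ⁿ → (G⧸Q)ⁿ`, `(g, x₁, …, xₙ) ↦ (g·ι x₁, …, g·ι xₙ)`
is continuous, its image is exactly the fibered product
`Fₙ = {(y₁, …, yₙ) : p y₁ = ⋯ = p yₙ}`, it is constant on the orbits of the right `H`-action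
`(g, x)·h = (gh, h⁻¹·x)`, and the induced map from the orbit space (with the quotient
topology) onto `Fₙ` (with the subspace topology) is a homeomorphism, equivariant for the
`G`-action by left translation on the first factor and the diagonal `G`-action on `Fₙ`. -/
theorem stmt_0
    {G : Type*} [Group G] [TopologicalSpace G] [IsTopologicalGroup G]
    [LocallyCompactSpace G] [SecondCountableTopology G] [T2Space G]
    (H Q : Subgroup G) (hQH : Q ≤ H)
    (hHclosed : IsClosed (H : Set G)) (hQclosed : IsClosed (Q : Set G))
    (n : ℕ) (hn : 1 ≤ n)
    (ι : (H ⧸ Q.subgroupOf H) → G ⧸ Q)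
    (hι : ∀ h : H, ι (QuotientGroup.mk h) = QuotientGroup.mk (h : G))
    (p : G ⧸ Q → G ⧸ H)
    (hp : ∀ g : G, p (QuotientGroup.mk g) = QuotientGroup.mk g)
    (qn : G × (Fin n → H ⧸ Q.subgroupOf H) → (Fin n → G ⧸ Q))
    (hqn : ∀ (g : G) (x : Fin n → H ⧸ Q.subgroupOf H) (i : Fin n),
      qn (g, x) i = g • ι (x i))
    (Fn : Set (Fin n → G ⧸ Q))
    (hFn : Fn = {y | ∀ i j : Fin n, p (y i) = p (y j)})
    -- the orbit equivalence relation of the right `H`-action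
    -- `(g, x₁, …, xₙ)·h = (gh, h⁻¹·x₁, …, h⁻¹·xₙ)`
    (s : Setoid (G × (Fin n → H ⧸ Q.subgroupOf H)))
    (hs : ∀ a b : G × (Fin n → H ⧸ Q.subgroupOf H),
      s.r a b ↔ ∃ h : H, b.1 = a.1 * (h : G) ∧ ∀ i, b.2 i = h⁻¹ • a.2 i) :
    Continuous qn ∧
    Set.range qn = Fn ∧
    (∀ a b : G × (Fin n → H ⧸ Q.subgroupOf H), s.r a b → qn a = qn b) ∧
    ∃ e : Quotient s ≃ₜ Fn,
      (∀ a : G × (Fin n → H ⧸ Q.subgroupOf H),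
        (e (Quotient.mk s a) : Fin n → G ⧸ Q) = qn a) ∧
      (∀ (g₀ : G) (a : G × (Fin n → H ⧸ Q.subgroupOf H)),
        (e (Quotient.mk s (g₀ * a.1, a.2)) : Fin n → G ⧸ Q)
          = fun i => g₀ • (e (Quotient.mk s a) : Fin n → G ⧸ Q) i) := by
  have i0 : Fin n := ⟨0, hn⟩
  -- basic computation of `qn` on representatives
  have hqn' : ∀ (g : G) (x : Fin n → H ⧸ Q.subgroupOf H) (h : H) (i : Fin n),
      x i = QuotientGroup.mk h → qn (g, x) i = QuotientGroup.mk (g * (h : G)) := by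
    intro g x h i hx
    rw [hqn, hx, hι]
    rfl
  -- characterization of membership in `Fn` for tuples of `mk`s
  have hFnmk : ∀ w : Fin n → G,
      ((fun i => (QuotientGroup.mk (w i) : G ⧸ Q)) ∈ Fn ↔ ∀ i j, (w i)⁻¹ * w j ∈ H) := by
    intro w
    rw [hFn]
    simp only [Set.mem_setOf_eq, hp, QuotientGroup.eq]
  -- continuity of ι
  have hιc : Continuous ι := by
    rw [(QuotientGroup.isQuotientMap_mk (Q.subgroupOf H)).continuous_iff]
    have : ((ι ∘ QuotientGroup.mk) : H → G ⧸ Q)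
        = fun h : H => (QuotientGroup.mk (h : G) : G ⧸ Q) := funext hι
    rw [this]
    exact QuotientGroup.continuous_mk.comp continuous_subtype_val
  -- continuity of qn
  have hqnc : Continuous qn := by
    have : qn = fun a => fun i => a.1 • ι (a.2 i) := by
      funext a i; exact hqn a.1 a.2 i
    rw [this]
    exact continuous_pi fun i =>
      continuous_fst.smul (hιc.comp ((continuous_apply i).comp continuous_snd))
  -- range of qn is Fn
  have hrange : Set.range qn = Fn := by
    apply Set.Subset.antisymm
    · rintro y ⟨⟨g, x⟩, rfl⟩
      choose h hh using fun i => QuotientGroup.mk_surjective (x i)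
      have hq : qn (g, x) = fun i => QuotientGroup.mk (g * (h i : G)) := by
        funext i; exact hqn' g x (h i) i (hh i).symm
      rw [hq, hFnmk]
      intro i j
      have : (g * (h i : G))⁻¹ * (g * (h j : G)) = (h i : G)⁻¹ * (h j : G) := by group
      rw [this]
      exact H.mul_mem (H.inv_mem (h i).2) (h j).2
    · intro y hy
      choose w hw using fun i => QuotientGroup.mk_surjective (y i)
      have hyFn : (fun i => (QuotientGroup.mk (w i) : G ⧸ Q)) ∈ Fn := by
        have : (fun i => (QuotientGroup.mk (w i) : G ⧸ Q)) = y := funext hw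
        rw [this]; exact hy
      have hwH : ∀ i j, (w i)⁻¹ * w j ∈ H := (hFnmk w).mp hyFn
      refine ⟨(w i0, fun i => QuotientGroup.mk ⟨(w i0)⁻¹ * w i, hwH i0 i⟩), ?_⟩
      funext i
      rw [hqn' _ _ ⟨(w i0)⁻¹ * w i, hwH i0 i⟩ i rfl]
      have : w i0 * ((w i0)⁻¹ * w i) = w i := by group
      rw [this, hw]
  -- qn is constant on s-classes
  have hinv : ∀ a b : G × (Fin n → H ⧸ Q.subgroupOf H), s.r a b → qn a = qn b := by
    rintro ⟨g, x⟩ ⟨g', x'⟩ hab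
    obtain ⟨h, hb1, hb2⟩ := (hs _ _).mp hab
    simp only at hb1 hb2
    funext i
    choose k hk using fun i => QuotientGroup.mk_surjective (x i)
    rw [hqn' g x (k i) i (hk i).symm,
      hqn' g' x' (h⁻¹ * k i) i (by rw [hb2 i, ← hk i]; rfl), hb1]
    congr 1
    push_cast
    group
  -- qn separates s-classes
  have hinj : ∀ a b : G × (Fin n → H ⧸ Q.subgroupOf H), qn a = qn b → s.r a b := by
    rintro ⟨g, x⟩ ⟨g', x'⟩ hab
    choose k hk using fun i => QuotientGroup.mk_surjective (x i)
    choose k' hk' using fun i => QuotientGroup.mk_surjective (x' i)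
    have heq : ∀ i, (g * (k i : G))⁻¹ * (g' * (k' i : G)) ∈ Q := by
      intro i
      rw [← QuotientGroup.eq, ← hqn' g x (k i) i (hk i).symm,
        ← hqn' g' x' (k' i) i (hk' i).symm, hab]
    have hgH : g⁻¹ * g' ∈ H := by
      have h0 := heq i0
      have : g⁻¹ * g' = (k i0 : G) * ((g * (k i0 : G))⁻¹ * (g' * (k' i0 : G))) * (k' i0 : G)⁻¹ := by
        group
      rw [this]
      exact H.mul_mem (H.mul_mem (k i0).2 (hQH h0)) (H.inv_mem (k' i0).2)
    refine (hs _ _).mpr ⟨⟨g⁻¹ * g', hgH⟩, by simp, fun i => ?_⟩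
    have : (⟨g⁻¹ * g', hgH⟩ : H)⁻¹ • x i
        = QuotientGroup.mk ((⟨g⁻¹ * g', hgH⟩ : H)⁻¹ * k i) := by rw [← hk i]; rfl
    show x' i = (⟨g⁻¹ * g', hgH⟩ : H)⁻¹ • x i
    rw [this, ← hk' i, QuotientGroup.eq, Subgroup.mem_subgroupOf]
    have : (((k' i)⁻¹ * ((⟨g⁻¹ * g', hgH⟩ : H)⁻¹ * k i) : H) : G)
        = ((g' * (k' i : G))⁻¹ * (g * (k i : G))) := by push_cast; group
    rw [this]
    simpa [mul_assoc] using Q.inv_mem (heq i)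
  -- the key openness lemma
  have key : ∀ V : Set (G × (Fin n → H ⧸ Q.subgroupOf H)), IsOpen V →
      (∀ (b : G × (Fin n → H ⧸ Q.subgroupOf H)) (h : H), b ∈ V →
        ((b.1 * (h : G), fun i => h⁻¹ • b.2 i) : G × (Fin n → H ⧸ Q.subgroupOf H)) ∈ V) →
      ∀ a ∈ V, ∃ W : Set (Fin n → G ⧸ Q), IsOpen W ∧ qn a ∈ W ∧ Fn ∩ W ⊆ qn '' V := by
    rintro V hVo hVinv ⟨g, x⟩ haV
    choose h hh using fun i => QuotientGroup.mk_surjective (x i)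
    -- normalize so that the i0 coordinate is represented by 1
    set g₁ : G := g * (h i0 : G) with hg₁
    set k : Fin n → H := fun i => (h i0)⁻¹ * h i with hkdef
    have ha'V : ((g₁, fun i => QuotientGroup.mk (k i)) : G × (Fin n → H ⧸ Q.subgroupOf H)) ∈ V := by
      have := hVinv (g, x) (h i0) haV
      have hx2 : (fun i => (h i0)⁻¹ • x i) = fun i => (QuotientGroup.mk (k i) : H ⧸ Q.subgroupOf H) := by
        funext i; rw [← hh i]; rfl
      rwa [hx2] at this
    -- pull back along the representative map
    set φ : G × (Fin n → H) → G × (Fin n → H ⧸ Q.subgroupOf H) :=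
      fun b => (b.1, fun i => QuotientGroup.mk (b.2 i)) with hφ
    have hφc : Continuous φ :=
      continuous_fst.prodMk (continuous_pi fun i =>
        QuotientGroup.continuous_mk.comp ((continuous_apply i).comp continuous_snd))
    have hpre : IsOpen (φ ⁻¹' V) := hVo.preimage hφc
    have hmemφ : (g₁, k) ∈ φ ⁻¹' V := ha'V
    obtain ⟨A₀, T, hA₀, hT, hgA₀, hkT, hsub⟩ := isOpen_prod_iff.mp hpre g₁ k hmemφ
    -- a pi-neighborhood of k inside T
    obtain ⟨I, u, hu, hIu⟩ := isOpen_pi_iff.mp hT k hkT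
    set B : Fin n → Set H := fun i => if i ∈ I then u i else Set.univ with hB
    have hBo : ∀ i, IsOpen (B i) := by
      intro i; rw [hB]; dsimp only
      split
      · exact (hu i (by assumption)).1
      · exact isOpen_univ
    have hkB : ∀ i, k i ∈ B i := by
      intro i; rw [hB]; dsimp only
      split
      · exact (hu i (by assumption)).2
      · trivial
    have hBT : Set.pi Set.univ B ⊆ T := by
      intro b hb
      apply hIu
      intro i hi
      have := hb i (Set.mem_univ i)
      rw [hB] at this; dsimp only at this
      rwa [if_pos (Finset.mem_coe.mp hi)] at this
    -- write B i as preimage of an open set of G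
    have : ∀ i, ∃ C : Set G, IsOpen C ∧ Subtype.val ⁻¹' C = B i := by
      intro i
      obtain ⟨C, hC, hCB⟩ := isOpen_induced_iff.mp (hBo i)
      exact ⟨C, hC, hCB⟩
    choose C hCo hCB using this
    -- shrink: A ∋ g₁, D ∋ 1 with A * D ⊆ A₀ ; D2 i ∋ 1, C' i ∋ k i with (D2 i)⁻¹ * C' i ⊆ C i
    obtain ⟨A, D1, hA, hD1, hgA, h1D1, hAD⟩ :=
      isOpen_prod_iff.mp (hA₀.preimage (continuous_mul : Continuous fun p : G × G => p.1 * p.2))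
        g₁ 1 (by simpa using hgA₀)
    have hCmem : ∀ i, (k i : G) ∈ C i := by
      intro i
      have := hkB i
      rw [← hCB i] at this
      exact this
    have : ∀ i, ∃ D2 C' : Set G, IsOpen D2 ∧ IsOpen C' ∧ (1 : G) ∈ D2 ∧ (k i : G) ∈ C' ∧
        ∀ d ∈ D2, ∀ c ∈ C', d⁻¹ * c ∈ C i := by
      intro i
      have hco : Continuous fun p : G × G => p.1⁻¹ * p.2 :=
        (continuous_fst.inv).mul continuous_snd
      obtain ⟨D2, C', hD2, hC', h1, hki, hsub2⟩ :=
        isOpen_prod_iff.mp ((hCo i).preimage hco) 1 (k i : G) (by simpa using hCmem i)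
      exact ⟨D2, C', hD2, hC', h1, hki, fun d hd c hc => hsub2 (Set.mk_mem_prod hd hc)⟩
    choose D2 C' hD2o hC'o h1D2 hkC' hDC using this
    set D : Set G := D1 ∩ ⋂ i, D2 i with hD
    have hDo : IsOpen D := hD1.inter (isOpen_iInter_of_finite hD2o)
    have h1D : (1 : G) ∈ D := ⟨h1D1, Set.mem_iInter.mpr h1D2⟩
    set Cs : Fin n → Set G := fun i => if i = i0 then C' i ∩ D else C' i with hCs
    have hCso : ∀ i, IsOpen (Cs i) := by
      intro i; rw [hCs]; dsimp only
      split
      · exact (hC'o i).inter hDo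
      · exact hC'o i
    have hkCs : ∀ i, (k i : G) ∈ Cs i := by
      intro i; rw [hCs]; dsimp only
      split
      · rename_i hi
        refine ⟨hkC' i, ?_⟩
        subst hi
        have : (k i : G) = 1 := by rw [hkdef]; simp
        rw [this]; exact h1D
      · exact hkC' i
    have hCsC' : ∀ i, Cs i ⊆ C' i := by
      intro i; rw [hCs]; dsimp only
      split
      · exact Set.inter_subset_left
      · exact le_refl _
    -- the open set W
    set W : Set (Fin n → G ⧸ Q) :=
      ⋃ g' ∈ A, Set.pi Set.univ
        (fun i => (QuotientGroup.mk : G → G ⧸ Q) '' ((g' * ·) '' Cs i)) with hW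
    have hWo : IsOpen W := by
      apply isOpen_biUnion
      intro g' _
      apply isOpen_set_pi Set.finite_univ
      intro i _
      exact QuotientGroup.isOpenMap_coe _ ((Homeomorph.mulLeft g').isOpenMap _ (hCso i))
    have hqnW : qn (g, x) ∈ W := by
      rw [hW]
      refine Set.mem_biUnion hgA ?_
      intro i _
      refine ⟨g₁ * (k i : G), ⟨(k i : G), hkCs i, rfl⟩, ?_⟩
      rw [hqn' g x (h i) i (hh i).symm]
      congr 1
      rw [hg₁, hkdef]
      push_cast
      group
    refine ⟨W, hWo, hqnW, ?_⟩
    -- the main inclusion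
    rintro y ⟨hyFn, hyW⟩
    rw [hW] at hyW
    obtain ⟨g', hg'A, hy⟩ := Set.mem_iUnion₂.mp hyW
    have hcc : ∀ i, ∃ c, c ∈ Cs i ∧ (QuotientGroup.mk (g' * c) : G ⧸ Q) = y i := by
      intro i
      obtain ⟨-, ⟨c, hcCs, rfl⟩, h2⟩ := hy i (Set.mem_univ i)
      exact ⟨c, hcCs, h2⟩
    choose c hc hyc using hcc
    -- use the Fn condition to transfer into H
    have hyFn' : ∀ i j, (g' * c i)⁻¹ * (g' * c j) ∈ H := by
      have : (fun i => (QuotientGroup.mk (g' * c i) : G ⧸ Q)) = y := funext hyc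
      exact (hFnmk _).mp (this ▸ hyFn)
    have hcD : c i0 ∈ D := by
      have := hc i0
      rw [hCs] at this; dsimp only at this
      rw [if_pos rfl] at this
      exact this.2
    have hmH : ∀ i, (c i0)⁻¹ * c i ∈ H := by
      intro i
      have := hyFn' i0 i
      have he : (g' * c i0)⁻¹ * (g' * c i) = (c i0)⁻¹ * c i := by group
      rwa [he] at this
    set m : Fin n → H := fun i => ⟨(c i0)⁻¹ * c i, hmH i⟩ with hm
    have hmB : ∀ i, m i ∈ B i := by
      intro i
      rw [← hCB i]
      exact hDC i (c i0) (Set.mem_iInter.mp hcD.2 i) (c i) (hCsC' i (hc i))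
    have hg''A₀ : g' * c i0 ∈ A₀ := hAD (Set.mk_mem_prod hg'A hcD.1)
    have hvV : ((g' * c i0, fun i => QuotientGroup.mk (m i))
        : G × (Fin n → H ⧸ Q.subgroupOf H)) ∈ V :=
      hsub (Set.mk_mem_prod hg''A₀ (hBT fun i _ => hmB i))
    refine ⟨_, hvV, ?_⟩
    funext i
    rw [hqn' _ _ (m i) i rfl]
    rw [← hyc i]
    congr 1
    rw [hm]
    dsimp only
    group
  -- assemble the homeomorphism
  have hFnmem : ∀ a, qn a ∈ Fn := by
    intro a; rw [← hrange]; exact ⟨a, rfl⟩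
  set f : G × (Fin n → H ⧸ Q.subgroupOf H) → Fn := fun a => ⟨qn a, hFnmem a⟩ with hf
  have hfc : Continuous f := hqnc.subtype_mk _
  have hfresp : ∀ a b, a ≈ b → f a = f b := fun a b hab => Subtype.ext (hinv a b hab)
  set e₀ : Quotient s → Fn := Quotient.lift f hfresp with he₀
  have he₀c : Continuous e₀ := hfc.quotient_lift hfresp
  have he₀inj : Function.Injective e₀ := by
    intro u v huv
    obtain ⟨a⟩ := u
    obtain ⟨b⟩ := v
    exact Quotient.sound (hinj a b (congrArg Subtype.val huv))
  have he₀surj : Function.Surjective e₀ := by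
    rintro ⟨y, hy⟩
    rw [← hrange] at hy
    obtain ⟨a, ha⟩ := hy
    exact ⟨Quotient.mk s a, Subtype.ext ha⟩
  have he₀open : IsOpenMap e₀ := by
    intro O hO
    rw [isOpen_iff_forall_mem_open]
    rintro z ⟨u, huO, rfl⟩
    obtain ⟨a⟩ := u
    have hUo : IsOpen (Quotient.mk s ⁻¹' O) := hO.preimage continuous_quotient_mk'
    have hUinv : ∀ (b : G × (Fin n → H ⧸ Q.subgroupOf H)) (h : H),
        b ∈ Quotient.mk s ⁻¹' O →
        ((b.1 * (h : G), fun i => h⁻¹ • b.2 i) : G × (Fin n → H ⧸ Q.subgroupOf H))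
          ∈ Quotient.mk s ⁻¹' O := by
      intro b h hb
      have hrel : s.r b (b.1 * (h : G), fun i => h⁻¹ • b.2 i) :=
        (hs _ _).mpr ⟨h, rfl, fun i => rfl⟩
      have : Quotient.mk s b = Quotient.mk s (b.1 * (h : G), fun i => h⁻¹ • b.2 i) :=
        Quotient.sound hrel
      rwa [Set.mem_preimage, ← this]
    obtain ⟨W, hWo, hWmem, hWsub⟩ := key _ hUo hUinv a huO
    refine ⟨Subtype.val ⁻¹' W, ?_, hWo.preimage continuous_subtype_val, hWmem⟩
    rintro ⟨y, hy⟩ hyW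
    obtain ⟨b, hbU, hb⟩ := hWsub ⟨hy, hyW⟩
    exact ⟨Quotient.mk s b, hbU, Subtype.ext hb⟩
  refine ⟨hqnc, hrange, hinv,
    Equiv.toHomeomorphOfContinuousOpen
      (Equiv.ofBijective e₀ ⟨he₀inj, he₀surj⟩) he₀c he₀open, fun a => rfl, ?_⟩
  intro g₀ a
  funext i
  show qn (g₀ * a.1, a.2) i = g₀ • qn a i
  rw [hqn (g₀ * a.1) a.2 i, mul_smul]
  exact congrArg (g₀ • ·) (hqn a.1 a.2 i).symm
end

section
/- There exists a Borel function β : G → [0,∞) such that: (1) for every compact set K ⊆ G there is a continuous compactly supported function on G that agrees with β on KH = {kh : k ∈ K, h ∈ H}; (2) ∫_H β(gh) dμ_H(h) = 1 for every g ∈ G; and (3) for every ε > 0 there is a neighborhood U of the identity in G such that for every g₀ ∈ U, sup_{g ∈ G} ∫_H |β(g₀gh) − β(gh)| dμ_H(h) < ε. -/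
open MeasureTheory
open scoped Pointwise ENNReal

section StmtAux

open Set

variable {G : Type*} [Group G] [TopologicalSpace G] [IsTopologicalGroup G]
  [LocallyCompactSpace G] [SecondCountableTopology G] [T2Space G]
  [MeasurableSpace G] [BorelSpace G]

/-- Uniform smallness of left translations of a compactly supported continuous function. -/
theorem stmt3_aux_unif (u : G → ℝ) (hu : Continuous u) (hcs : HasCompactSupport u)
    {ε : ℝ} (hε : 0 < ε) :
    ∃ U ∈ nhds (1 : G), ∀ g₀ ∈ U, ∀ y : G, |u (g₀ * y) - u y| ≤ ε := by
  obtain ⟨K₁, hK₁c, hK₁⟩ := exists_compact_mem_nhds (1 : G)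
  set C : Set G := K₁⁻¹ * tsupport u ∪ tsupport u with hCdef
  have hCc : IsCompact C := (hK₁c.inv.mul hcs).union hcs
  have key : ∀ y : G, ∃ V ∈ nhds y, ∃ W ∈ nhds (1 : G),
      ∀ a ∈ W, ∀ z ∈ V, |u (a * z) - u y| < ε / 2 := by
    intro y
    have hcont : Continuous fun p : G × G => |u (p.1 * p.2) - u y| :=
      ((hu.comp continuous_mul).sub continuous_const).abs
    have hopen : IsOpen {p : G × G | |u (p.1 * p.2) - u y| < ε / 2} :=
      isOpen_lt hcont continuous_const
    have hmem : ((1 : G), y) ∈ {p : G × G | |u (p.1 * p.2) - u y| < ε / 2} := by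
      simp only [Set.mem_setOf_eq, one_mul, sub_self, abs_zero]
      linarith
    rcases mem_nhds_prod_iff.mp (hopen.mem_nhds hmem) with ⟨W, hW, V, hV, hWV⟩
    exact ⟨V, hV, W, hW, fun a ha z hz => hWV (Set.mk_mem_prod ha hz)⟩
  choose V hV W hW hkey using key
  rcases hCc.elim_nhds_subcover V (fun y _ => hV y) with ⟨t, htC, hcover⟩
  refine ⟨K₁ ∩ ⋂ y ∈ t, W y, ?_, ?_⟩
  · exact Filter.inter_mem hK₁ ((Filter.biInter_mem t.finite_toSet).mpr fun y _ => hW y)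
  · rintro g₀ ⟨hg₀K, hg₀W⟩ y
    by_cases hyC : y ∈ C
    · rcases Set.mem_iUnion₂.mp (hcover hyC) with ⟨y₀, hy₀t, hyV⟩
      have hg₀Wy₀ : g₀ ∈ W y₀ := Set.mem_iInter₂.mp hg₀W y₀ hy₀t
      have h1 : |u (g₀ * y) - u y₀| < ε / 2 := hkey y₀ g₀ hg₀Wy₀ y hyV
      have h2 : |u y - u y₀| < ε / 2 := by
        have := hkey y₀ 1 (mem_of_mem_nhds (hW y₀)) y hyV
        simpa using this
      have h3 : |u (g₀ * y) - u y| ≤ |u (g₀ * y) - u y₀| + |u y₀ - u y| := abs_sub_le _ _ _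
      rw [abs_sub_comm (u y₀) (u y)] at h3
      linarith
    · have h1 : u (g₀ * y) = 0 := by
        by_contra h
        have hmem : g₀ * y ∈ tsupport u :=
          subset_tsupport u (by simpa [Function.mem_support] using h)
        have : y ∈ K₁⁻¹ * tsupport u := by
          refine ⟨g₀⁻¹, Set.inv_mem_inv.mpr hg₀K, g₀ * y, hmem, ?_⟩
          group
        exact hyC (Or.inl this)
      have h2 : u y = 0 := by
        by_contra h
        exact hyC (Or.inr (subset_tsupport u (by simpa [Function.mem_support] using h)))
      simp [h1, h2, le_of_lt hε]

/-- Uniform positive lower bound on the Haar measure of conjugated neighborhoods,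
over a compact set of conjugators. -/
theorem stmt3_aux_conj (H : Subgroup G) (μH : Measure H) [μH.IsHaarMeasure]
    {O : Set G} (hO : IsOpen O) (h1O : (1 : G) ∈ O) {A : Set G} (hA : IsCompact A) :
    ∃ c : ℝ≥0∞, 0 < c ∧ ∀ a ∈ A, c ≤ μH {h : H | a * (h : G) * a⁻¹ ∈ O} := by
  classical
  have key : ∀ _ : G, ∃ Wo : Set G, ∃ Bo : Set G, IsOpen Wo ∧ (1 : G) ∈ Wo ∧
      IsOpen Bo ∧ (1 : G) ∈ Bo ∧ ∀ w ∈ Wo, ∀ b ∈ Bo, w * b * w⁻¹ ∈ O := by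
    intro _
    have hcont : Continuous fun p : G × G => p.1 * p.2 * p.1⁻¹ := by continuity
    have hmem : ((1 : G), (1 : G)) ∈ (fun p : G × G => p.1 * p.2 * p.1⁻¹) ⁻¹' O := by
      simp [h1O]
    rcases mem_nhds_prod_iff.mp (((hO.preimage hcont).mem_nhds hmem)) with ⟨W, hW, B, hB, hWB⟩
    rcases mem_nhds_iff.mp hW with ⟨W', hW'sub, hW'open, hW'1⟩
    rcases mem_nhds_iff.mp hB with ⟨B', hB'sub, hB'open, hB'1⟩
    exact ⟨W', B', hW'open, hW'1, hB'open, hB'1,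
      fun w hw b hb => hWB (Set.mk_mem_prod (hW'sub hw) (hB'sub hb))⟩
  choose Wo Bo hWoO hWo1 hBoO hBo1 hWB using key
  set Vo : G → Set G := fun a₀ => (fun a => a * a₀⁻¹) ⁻¹' Wo a₀ with hVodef
  have hVoOpen : ∀ a₀, IsOpen (Vo a₀) := fun a₀ => (hWoO a₀).preimage (continuous_mul_right _)
  have hVomem : ∀ a₀, a₀ ∈ Vo a₀ := by
    intro a₀
    have : a₀ * a₀⁻¹ = 1 := by group
    simp only [hVodef, Set.mem_preimage, this]
    exact hWo1 a₀
  rcases hA.elim_finite_subcover Vo hVoOpen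
    (fun a ha => Set.mem_iUnion.mpr ⟨a, hVomem a⟩) with ⟨t, ht⟩
  set Ω : G → Set H := fun a₀ => {h : H | a₀ * (h : G) * a₀⁻¹ ∈ Bo a₀} with hΩdef
  have hΩopen : ∀ a₀, IsOpen (Ω a₀) := by
    intro a₀
    have hc : Continuous fun h : H => a₀ * (h : G) * a₀⁻¹ :=
      (continuous_mul_right _).comp ((continuous_mul_left _).comp continuous_subtype_val)
    exact (hBoO a₀).preimage hc
  have hΩ1 : ∀ a₀, (1 : H) ∈ Ω a₀ := by
    intro a₀
    have : a₀ * ((1 : H) : G) * a₀⁻¹ = 1 := by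
      simp only [OneMemClass.coe_one, mul_one]
      group
    simp only [hΩdef, Set.mem_setOf_eq, this]
    exact hBo1 a₀
  have hΩpos : ∀ a₀, 0 < μH (Ω a₀) := fun a₀ => (hΩopen a₀).measure_pos μH ⟨1, hΩ1 a₀⟩
  by_cases hte : t.Nonempty
  · refine ⟨t.inf' hte fun a₀ => μH (Ω a₀), ?_, ?_⟩
    · rw [Finset.lt_inf'_iff]
      exact fun b _ => hΩpos b
    · intro a ha
      rcases Set.mem_iUnion₂.mp (ht ha) with ⟨a₀, ha₀t, haV⟩
      have hsub : Ω a₀ ⊆ {h : H | a * (h : G) * a⁻¹ ∈ O} := by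
        intro h hh
        have hw : a * a₀⁻¹ ∈ Wo a₀ := haV
        have hmem := hWB a₀ _ hw _ hh
        have heq : a * a₀⁻¹ * (a₀ * (h : G) * a₀⁻¹) * (a * a₀⁻¹)⁻¹ = a * (h : G) * a⁻¹ := by
          group
        rw [heq] at hmem
        exact hmem
      calc t.inf' hte (fun a₀ => μH (Ω a₀)) ≤ μH (Ω a₀) := Finset.inf'_le _ ha₀t
        _ ≤ μH {h : H | a * (h : G) * a⁻¹ ∈ O} := measure_mono hsub
  · refine ⟨1, zero_lt_one, ?_⟩
    intro a ha
    rcases Set.mem_iUnion₂.mp (ht ha) with ⟨a₀, ha₀t, _⟩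
    exact absurd ⟨a₀, ha₀t⟩ hte

theorem stmt3_abs_toReal {a b t : ℝ≥0∞} (ha : a ≠ ⊤) (hb : b ≠ ⊤) (ht : t ≠ ⊤)
    (h1 : a ≤ b + t) (h2 : b ≤ a + t) : |a.toReal - b.toReal| ≤ t.toReal := by
  rw [abs_sub_le_iff]
  constructor
  · have h := ENNReal.toReal_mono (ENNReal.add_ne_top.mpr ⟨hb, ht⟩) h1
    rw [ENNReal.toReal_add hb ht] at h
    linarith
  · have h := ENNReal.toReal_mono (ENNReal.add_ne_top.mpr ⟨ha, ht⟩) h2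
    rw [ENNReal.toReal_add ha ht] at h
    linarith

/-- Construction of a Borel fiberwise-normalized kernel `κ`. -/
theorem stmt3_kappa (H : Subgroup G) (hHclosed : IsClosed (H : Set G))
    (μH : Measure H) [μH.IsHaarMeasure] [SigmaFinite μH] :
    ∃ κ : G → ℝ≥0∞, Measurable κ ∧
      (∀ z : G, ∫⁻ h : H, κ (z * (h : G)) ∂μH = 1) ∧
      (∀ C : Set G, IsCompact C → ∃ b : ℝ≥0∞, b ≠ ⊤ ∧ ∀ w ∈ C, κ w ≤ b) ∧
      (∀ C : Set G, IsCompact C → ∃ D : Set G, IsCompact D ∧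
        ∀ w : G, κ w ≠ 0 → w ∈ C * (H : Set G) → w ∈ D) := by
  classical
  haveI : BorelSpace H := Subtype.borelSpace (H : Set G)
  obtain ⟨Kc, hKcc, hKc⟩ := exists_compact_mem_nhds (1 : G)
  set O : Set G := interior Kc with hOdef
  have hOopen : IsOpen O := isOpen_interior
  have h1O : (1 : G) ∈ O := mem_interior_iff_mem_nhds.mpr hKc
  set E := CompactExhaustion.choice G with hEdef
  set SatA : ℕ → Set G := fun n => E n * (H : Set G) with hSatdef
  have hSatmem : ∀ (n : ℕ) (x : G), x ∈ E n → x ∈ SatA n := by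
    intro n x hx
    exact ⟨x, hx, 1, H.one_mem, mul_one x⟩
  have hSatunion : ∀ x : G, ∃ n, x ∈ SatA n := by
    intro x
    obtain ⟨n, hn⟩ := E.exists_mem x
    exact ⟨n, hSatmem n x hn⟩
  have hSatsat : ∀ (n : ℕ) (x : G) (h : H), x ∈ SatA n → x * (h : G) ∈ SatA n := by
    rintro n x h ⟨a, ha, b, hb, rfl⟩
    exact ⟨a, ha, b * (h : G), H.mul_mem hb h.2, (mul_assoc a b (h : G)).symm⟩
  have hSatsat' : ∀ (n : ℕ) (x : G) (h : H), x * (h : G) ∈ SatA n → x ∈ SatA n := by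
    intro n x h hx
    have h2 := hSatsat n (x * (h : G)) h⁻¹ hx
    have : x * (h : G) * ((h⁻¹ : H) : G) = x := by
      have : ((h⁻¹ : H) : G) = ((h : G))⁻¹ := rfl
      rw [this]
      group
    rwa [this] at h2
  have hSatmeas : ∀ n, MeasurableSet (SatA n) := by
    intro n
    have hdecomp : SatA n = ⋃ k, E n * ((H : Set G) ∩ E k) := by
      have hH : (H : Set G) = ⋃ k, (H : Set G) ∩ E k := by
        rw [← Set.inter_iUnion, E.iUnion_eq, Set.inter_univ]
      calc SatA n = E n * (H : Set G) := rfl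
        _ = E n * ⋃ k, (H : Set G) ∩ E k := by rw [← hH]
        _ = ⋃ k, E n * ((H : Set G) ∩ E k) := by
            rw [Set.mul_iUnion]
    rw [hdecomp]
    refine MeasurableSet.iUnion fun k => ?_
    exact ((E.isCompact n).mul ((E.isCompact k).inter_left hHclosed)).isClosed.measurableSet
  set Bn : ℕ → Set G := fun n => SatA n \ ⋃ (m : ℕ) (_ : m < n), SatA m with hBndef
  have hBnmeas : ∀ n, MeasurableSet (Bn n) := fun n =>
    (hSatmeas n).diff (MeasurableSet.iUnion fun m => MeasurableSet.iUnion fun _ => hSatmeas m)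
  have hBnsub : ∀ n, Bn n ⊆ SatA n := fun n => Set.diff_subset
  set idx : G → ℕ := fun x => Nat.find (hSatunion x) with hidxdef
  have hidx : ∀ x, x ∈ Bn (idx x) := by
    intro x
    refine ⟨Nat.find_spec (hSatunion x), ?_⟩
    intro hmem
    rcases Set.mem_iUnion.mp hmem with ⟨m, hm⟩
    rcases Set.mem_iUnion.mp hm with ⟨hmlt, hmmem⟩
    exact Nat.find_min (hSatunion x) hmlt hmmem
  have hnotmem : ∀ (x : G) (m : ℕ), m < idx x → x ∉ SatA m := by
    intro x m hm hmem
    exact (hidx x).2 (Set.mem_iUnion.mpr ⟨m, Set.mem_iUnion.mpr ⟨hm, hmem⟩⟩)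
  have hBnidx : ∀ (x : G) (n : ℕ), x ∈ Bn n → n = idx x := by
    intro x n hx
    by_contra hne
    rcases lt_or_gt_of_ne hne with hlt | hgt
    · exact hnotmem x n hlt hx.1
    · have : x ∉ SatA (idx x) :=
        fun hmem => hx.2 (Set.mem_iUnion.mpr ⟨idx x, Set.mem_iUnion.mpr ⟨hgt, hmem⟩⟩)
      exact this (Nat.find_spec (hSatunion x))
  have hidxle_of_mem : ∀ (w : G) (m : ℕ), w ∈ SatA m → idx w ≤ m := by
    intro w m hwSat
    by_contra hgt
    push_neg at hgt
    exact hnotmem w m hgt hwSat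
  have hidxsat : ∀ (x : G) (h : H), idx (x * (h : G)) = idx x := by
    intro x h
    have h1 : x * (h : G) ∈ Bn (idx x) := by
      refine ⟨hSatsat _ _ h (Nat.find_spec (hSatunion x)), ?_⟩
      intro hmem
      rcases Set.mem_iUnion.mp hmem with ⟨m, hm⟩
      rcases Set.mem_iUnion.mp hm with ⟨hmlt, hmmem⟩
      exact hnotmem x m hmlt (hSatsat' m x h hmmem)
    exact (hBnidx _ _ h1).symm
  set S : ℕ → Set G := fun n => Kc * E n with hSdef
  have hScomp : ∀ n, IsCompact (S n) := fun n => hKcc.mul (E.isCompact n)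
  have hSmeas : ∀ n, MeasurableSet (S n) := fun n => (hScomp n).isClosed.measurableSet
  set mfib : ℕ → G → ℝ≥0∞ := fun n x => μH {h : H | x * (h : G) ∈ S n} with hmfibdef
  have hmfibMeas : ∀ n, Measurable (mfib n) := by
    intro n
    have hc : Continuous fun p : G × H => p.1 * ((p.2 : H) : G) :=
      continuous_fst.mul (continuous_subtype_val.comp continuous_snd)
    have hms : MeasurableSet {p : G × H | p.1 * ((p.2 : H) : G) ∈ S n} :=
      hc.measurable (hSmeas n)
    exact measurable_measure_prodMk_left (ν := μH) hms
  have hmfibinv : ∀ (n : ℕ) (x : G) (h : H), mfib n (x * (h : G)) = mfib n x := by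
    intro n x h
    have hset : {k : H | x * (h : G) * (k : G) ∈ S n}
        = (fun k : H => h * k) ⁻¹' {k : H | x * (k : G) ∈ S n} := by
      ext k
      simp only [Set.mem_setOf_eq, Set.mem_preimage, Subgroup.coe_mul, mul_assoc]
    show μH {k : H | x * (h : G) * (k : G) ∈ S n} = μH {k : H | x * (k : G) ∈ S n}
    rw [hset, measure_preimage_mul μH h _]
  have hconj : ∀ n : ℕ, ∃ c : ℝ≥0∞, 0 < c ∧
      ∀ a ∈ E n, c ≤ μH {h : H | a * (h : G) * a⁻¹ ∈ O} :=
    fun n => stmt3_aux_conj H μH hOopen h1O (E.isCompact n)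
  choose cc hccpos hcc using hconj
  have hmfib_lower : ∀ (n : ℕ) (x : G), x ∈ SatA n → cc n ≤ mfib n x := by
    rintro n x ⟨a, ha, b, hb, rfl⟩
    have hx : mfib n (a * ((⟨b, hb⟩ : H) : G)) = mfib n a := hmfibinv n a ⟨b, hb⟩
    have hxb : mfib n (a * b) = mfib n a := hx
    rw [hxb]
    refine le_trans (hcc n a ha) (measure_mono ?_)
    intro h hh
    have heq : a * (h : G) = a * (h : G) * a⁻¹ * a := by group
    show a * (h : G) ∈ S n
    rw [heq]
    exact Set.mul_mem_mul (interior_subset hh) ha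
  have hmfib_fin : ∀ (n : ℕ) (x : G), mfib n x ≠ ⊤ := by
    intro n x
    have hcomp : IsCompact {h : H | x * (h : G) ∈ S n} := by
      have hemb : Topology.IsClosedEmbedding ((↑) : H → G) :=
        hHclosed.isClosedEmbedding_subtypeVal
      have heq : {h : H | x * (h : G) ∈ S n}
          = ((↑) : H → G) ⁻¹' ((fun g => x * g) ⁻¹' S n) := rfl
      rw [heq]
      apply hemb.isCompact_preimage
      exact (Homeomorph.mulLeft x).isCompact_preimage.mpr (hScomp n)
    exact hcomp.measure_lt_top.ne
  have hmfib_pos : ∀ (n : ℕ) (x : G), x ∈ SatA n → 0 < mfib n x :=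
    fun n x hx => lt_of_lt_of_le (hccpos n) (hmfib_lower n x hx)
  set κ : G → ℝ≥0∞ := fun x => ∑' n, (Bn n ∩ S n).indicator (fun y => (mfib n y)⁻¹) x
    with hκdef
  have hκmeas : Measurable κ := by
    apply Measurable.ennreal_tsum
    intro n
    exact ((hmfibMeas n).inv).indicator ((hBnmeas n).inter (hSmeas n))
  have hκeq : ∀ x, κ x = (Bn (idx x) ∩ S (idx x)).indicator (fun y => (mfib (idx x) y)⁻¹) x := by
    intro x
    refine tsum_eq_single (idx x) ?_
    intro m hm
    apply Set.indicator_of_notMem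
    intro hmem
    exact hm (hBnidx x m hmem.1)
  have hκint : ∀ z : G, ∫⁻ h : H, κ (z * (h : G)) ∂μH = 1 := by
    intro z
    have hzBn : z ∈ Bn (idx z) := hidx z
    have hpt : ∀ h : H, κ (z * (h : G))
        = {h' : H | z * (h' : G) ∈ S (idx z)}.indicator (fun _ => (mfib (idx z) z)⁻¹) h := by
      intro h
      rw [hκeq (z * (h : G)), hidxsat z h]
      have hBmem : z * (h : G) ∈ Bn (idx z) := by
        have h1 := hidx (z * (h : G))
        rwa [hidxsat z h] at h1
      by_cases hmem : z * (h : G) ∈ S (idx z)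
      · have hmem2 : z * (h : G) ∈ Bn (idx z) ∩ S (idx z) := ⟨hBmem, hmem⟩
        rw [Set.indicator_of_mem hmem2,
          Set.indicator_of_mem (show h ∈ {h' : H | z * (h' : G) ∈ S (idx z)} from hmem),
          hmfibinv (idx z) z h]
      · rw [Set.indicator_of_notMem (fun hc => hmem hc.2),
          Set.indicator_of_notMem (show h ∉ {h' : H | z * (h' : G) ∈ S (idx z)} from hmem)]
    have hsetmeas : MeasurableSet {h' : H | z * (h' : G) ∈ S (idx z)} :=
      ((continuous_mul_left z).comp continuous_subtype_val).measurable (hSmeas (idx z))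
    calc ∫⁻ h : H, κ (z * (h : G)) ∂μH
        = ∫⁻ h : H,
            {h' : H | z * (h' : G) ∈ S (idx z)}.indicator (fun _ => (mfib (idx z) z)⁻¹) h ∂μH :=
          lintegral_congr hpt
      _ = (mfib (idx z) z)⁻¹ * μH {h' : H | z * (h' : G) ∈ S (idx z)} := by
          rw [lintegral_indicator hsetmeas _, setLIntegral_const]
      _ = (mfib (idx z) z)⁻¹ * mfib (idx z) z := rfl
      _ = 1 := ENNReal.inv_mul_cancel (hmfib_pos (idx z) z (hBnsub _ hzBn)).ne'
            (hmfib_fin (idx z) z)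
  refine ⟨κ, hκmeas, hκint, ?_, ?_⟩
  · intro C hC
    obtain ⟨m, hm⟩ := E.exists_superset_of_isCompact hC
    refine ⟨(Finset.range (m + 1)).sup fun n => (cc n)⁻¹, ?_, ?_⟩
    · rw [← lt_top_iff_ne_top, Finset.sup_lt_iff (by exact ENNReal.zero_lt_top)]
      exact fun n _ => ENNReal.inv_lt_top.mpr (hccpos n)
    · intro w hw
      have hwSat : w ∈ SatA m := hSatmem m w (hm hw)
      have hidxle : idx w ≤ m := hidxle_of_mem w m hwSat
      rw [hκeq w]
      by_cases hmem : w ∈ Bn (idx w) ∩ S (idx w)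
      · rw [Set.indicator_of_mem hmem]
        refine le_trans (ENNReal.inv_le_inv.mpr (hmfib_lower (idx w) w (hBnsub _ (hidx w))))
          (Finset.le_sup (f := fun n => (cc n)⁻¹) (Finset.mem_range.mpr (Nat.lt_succ_of_le hidxle)))
      · rw [Set.indicator_of_notMem hmem]
        exact zero_le
  · intro C hC
    obtain ⟨m, hm⟩ := E.exists_superset_of_isCompact hC
    refine ⟨Kc * E m, hKcc.mul (E.isCompact m), ?_⟩
    intro w hκw hwCH
    have hwSat : w ∈ SatA m := by
      rcases hwCH with ⟨a, ha, b, hb, rfl⟩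
      exact ⟨a, hm ha, b, hb, rfl⟩
    have hidxle : idx w ≤ m := hidxle_of_mem w m hwSat
    rw [hκeq w] at hκw
    have hwS : w ∈ Bn (idx w) ∩ S (idx w) := by
      by_contra hmem
      rw [Set.indicator_of_notMem hmem] at hκw
      exact hκw rfl
    exact Set.mul_subset_mul_left (E.subset hidxle) hwS.2

end StmtAux

/-- Let `G` be a locally compact, second countable Hausdorff topological
group and `H ≤ G` a closed subgroup, `μ_H` a left Haar measure on `H`.  There exists a
Borel function `β : G → [0,∞)` such that: (1) for every compact `K ⊆ G` there is a
continuous compactly supported function on `G` agreeing with `β` on `KH`;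
(2) `∫_H β(gh) dμ_H(h) = 1` for every `g ∈ G`; and (3) for every `ε > 0` there is a
neighborhood `U` of the identity such that for every `g₀ ∈ U`,
`sup_{g ∈ G} ∫_H |β(g₀gh) − β(gh)| dμ_H(h) < ε`. -/
theorem stmt_3
    {G : Type*} [Group G] [TopologicalSpace G] [IsTopologicalGroup G]
    [LocallyCompactSpace G] [SecondCountableTopology G] [T2Space G]
    [MeasurableSpace G] [BorelSpace G]
    (H : Subgroup G) (hHclosed : IsClosed (H : Set G))
    (μH : Measure H) [μH.IsHaarMeasure] :
    ∃ β : G → ℝ, Measurable β ∧ (∀ g, 0 ≤ β g) ∧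
      (∀ K : Set G, IsCompact K → ∃ φ : G → ℝ, Continuous φ ∧ HasCompactSupport φ ∧
        ∀ g ∈ K * (H : Set G), β g = φ g) ∧
      (∀ g : G, ∫ h : H, β (g * (h : G)) ∂μH = 1) ∧
      (∀ ε : ℝ, 0 < ε → ∃ U ∈ nhds (1 : G), ∀ g₀ ∈ U,
        (⨆ g : G, ∫ h : H, |β (g₀ * g * (h : G)) - β (g * (h : G))| ∂μH) < ε) := by
  classical
  haveI : BorelSpace H := Subtype.borelSpace (H : Set G)
  haveI : LocallyCompactSpace H := hHclosed.locallyCompactSpace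
  haveI : SecondCountableTopology H := TopologicalSpace.Subtype.secondCountableTopology (H : Set G)
  haveI : SigmaCompactSpace H := by infer_instance
  haveI : SigmaFinite μH := by infer_instance
  set lG : Measure G := Measure.haar with hlG
  haveI hlGhaar : lG.IsHaarMeasure := by rw [hlG]; infer_instance
  haveI : SigmaFinite lG := by infer_instance
  -- the smoothing function u₀
  obtain ⟨Kc', hKc'c, hKc'⟩ := exists_compact_mem_nhds (1 : G)
  obtain ⟨u₀c, hu₀1, -, hu₀supp, hu₀icc⟩ :=
    exists_continuous_one_zero_of_isCompact hKc'c isClosed_empty (Set.disjoint_empty _)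
  set u₀ : G → ℝ := fun y => u₀c y with hu₀def
  have hu₀cont : Continuous u₀ := u₀c.continuous
  have hu₀nonneg : ∀ y, 0 ≤ u₀ y := fun y => (hu₀icc y).1
  have hu₀le1 : ∀ y, u₀ y ≤ 1 := fun y => (hu₀icc y).2
  set u' : G → ℝ≥0∞ := fun y => ENNReal.ofReal (u₀ y) with hu'def
  have hu'meas : Measurable u' := ENNReal.measurable_ofReal.comp hu₀cont.measurable
  have hu'le1 : ∀ y, u' y ≤ 1 := fun y => by
    rw [hu'def]
    simpa using ENNReal.ofReal_le_one.mpr (hu₀le1 y)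
  set Ku : Set G := tsupport u₀ with hKudef
  have hKuc : IsCompact Ku := hu₀supp
  have hu'supp : ∀ y, u' y ≠ 0 → y ∈ Ku := by
    intro y hy
    apply subset_tsupport u₀
    simp only [Function.mem_support]
    intro h0
    apply hy
    show ENNReal.ofReal (u₀ y) = 0
    rw [h0, ENNReal.ofReal_zero]
  set cE : ℝ≥0∞ := ∫⁻ y, u' y ∂lG with hcEdef
  have hcEtop : cE ≠ ⊤ := by
    have hle : ∀ y, u' y ≤ Ku.indicator (fun _ => (1 : ℝ≥0∞)) y := by
      intro y
      by_cases hmem : y ∈ Ku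
      · rw [Set.indicator_of_mem hmem]
        exact hu'le1 y
      · rw [Set.indicator_of_notMem hmem]
        by_contra hcon
        push_neg at hcon
        exact hmem (hu'supp y (by simpa using hcon.ne'))
    have hfin : (∫⁻ y, Ku.indicator (fun _ => (1 : ℝ≥0∞)) y ∂lG) = lG Ku := by
      rw [lintegral_indicator hKuc.isClosed.measurableSet _, setLIntegral_const, one_mul]
    refine ne_top_of_le_ne_top ?_ (lintegral_mono hle)
    rw [hfin]
    exact hKuc.measure_lt_top.ne
  have hcE0 : cE ≠ 0 := by
    have hge : ∀ y, (interior Kc').indicator (fun _ => (1 : ℝ≥0∞)) y ≤ u' y := by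
      intro y
      by_cases hmem : y ∈ interior Kc'
      · rw [Set.indicator_of_mem hmem]
        have h1 : u₀ y = 1 := by
          have := hu₀1 (interior_subset hmem)
          simpa using this
        rw [hu'def]
        simp [h1]
      · rw [Set.indicator_of_notMem hmem]
        exact zero_le
    have hpos : 0 < lG (interior Kc') :=
      isOpen_interior.measure_pos lG ⟨1, mem_interior_iff_mem_nhds.mpr hKc'⟩
    have : lG (interior Kc') ≤ cE := by
      rw [hcEdef]
      calc lG (interior Kc')
          = ∫⁻ y, (interior Kc').indicator (fun _ => (1 : ℝ≥0∞)) y ∂lG := by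
            rw [lintegral_indicator isOpen_interior.measurableSet _, setLIntegral_const, one_mul]
        _ ≤ ∫⁻ y, u' y ∂lG := lintegral_mono hge
    intro h0
    rw [h0] at this
    exact hpos.ne' (le_antisymm this zero_le)
  set cR : ℝ := cE.toReal with hcRdef
  have hcRpos : 0 < cR := ENNReal.toReal_pos hcE0 hcEtop
  -- the kernel κ
  obtain ⟨κ, hκmeas, hκint, hκbdd, hκsupp⟩ := stmt3_kappa H hHclosed μH
  -- the function β
  set Bq : G → ℝ≥0∞ := fun x => ∫⁻ y, u' y * κ (y⁻¹ * x) ∂lG with hBqdef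
  have hBqmeas : Measurable Bq := by
    have hFmeas : Measurable fun p : G × G => u' p.2 * κ (p.2⁻¹ * p.1) := by
      apply Measurable.mul
      · exact hu'meas.comp measurable_snd
      · exact hκmeas.comp (continuous_snd.inv.mul continuous_fst).measurable
    exact hFmeas.lintegral_prod_right'
  set β : G → ℝ := fun x => (Bq x).toReal / cR with hβdef
  have hβmeas : Measurable β := (ENNReal.measurable_toReal.comp hBqmeas).div_const _
  have hβnonneg : ∀ x, 0 ≤ β x := fun x => div_nonneg ENNReal.toReal_nonneg hcRpos.le
  -- the fundamental fiber integral identity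
  have hgen : ∀ (w : G) (v : G → ℝ≥0∞), Measurable v →
      ∫⁻ h : H, (∫⁻ y, v y * κ (y⁻¹ * (w * (h : G))) ∂lG) ∂μH = ∫⁻ y, v y ∂lG := by
    intro w v hv
    have hmeas2 : Measurable (Function.uncurry fun (h : H) (y : G) =>
        v y * κ (y⁻¹ * (w * (h : G)))) := by
      apply Measurable.mul
      · exact hv.comp measurable_snd
      · refine hκmeas.comp ?_
        have hc : Continuous fun p : H × G => p.2⁻¹ * (w * ((p.1 : H) : G)) :=
          continuous_snd.inv.mul (continuous_const.mul (continuous_subtype_val.comp continuous_fst))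
        exact hc.measurable
    calc ∫⁻ h : H, (∫⁻ y, v y * κ (y⁻¹ * (w * (h : G))) ∂lG) ∂μH
        = ∫⁻ y, (∫⁻ h : H, v y * κ (y⁻¹ * (w * (h : G))) ∂μH) ∂lG :=
          lintegral_lintegral_swap hmeas2.aemeasurable
      _ = ∫⁻ y, v y * (∫⁻ h : H, κ ((y⁻¹ * w) * (h : G)) ∂μH) ∂lG := by
          apply lintegral_congr
          intro y
          have hassoc : ∀ h : H, v y * κ (y⁻¹ * (w * (h : G)))
              = v y * κ ((y⁻¹ * w) * (h : G)) := by
            intro h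
            rw [mul_assoc]
          rw [lintegral_congr hassoc]
          exact lintegral_const_mul _ (hκmeas.comp
            (((continuous_mul_left (y⁻¹ * w)).comp continuous_subtype_val).measurable))
      _ = ∫⁻ y, v y * 1 ∂lG := by
          apply lintegral_congr
          intro y
          rw [hκint (y⁻¹ * w)]
      _ = ∫⁻ y, v y ∂lG := by
          apply lintegral_congr
          intro y
          rw [mul_one]
  have hswap : ∀ w : G, ∫⁻ h : H, Bq (w * (h : G)) ∂μH = cE := by
    intro w
    exact hgen w u' hu'meas
  -- property (2)
  have hβint : ∀ g : G, ∫ h : H, β (g * (h : G)) ∂μH = 1 := by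
    intro g
    have hmeasb : Measurable fun h : H => Bq (g * (h : G)) :=
      hBqmeas.comp (continuous_const.mul continuous_subtype_val).measurable
    have haefin : ∀ᵐ h : H ∂μH, Bq (g * (h : G)) < ⊤ := by
      apply ae_lt_top hmeasb
      rw [hswap g]
      exact hcEtop
    have hstep : ∫ h : H, β (g * (h : G)) ∂μH
        = (∫ h : H, (Bq (g * (h : G))).toReal ∂μH) / cR := by
      rw [hβdef]
      simp only
      rw [integral_div]
    rw [hstep, integral_toReal hmeasb.aemeasurable haefin, hswap g, ← hcRdef,
      div_self hcRpos.ne']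
  -- z-form of Bq (for continuity)
  have hzform : ∀ x : G, Bq x = ∫⁻ z, u' (x * z) * κ (z⁻¹) ∂lG := by
    intro x
    rw [hBqdef]
    simp only
    rw [← lintegral_mul_left_eq_self (μ := lG) (fun y => u' y * κ (y⁻¹ * x)) x]
    apply lintegral_congr
    intro z
    congr 2
    group
  -- continuity of β
  have hβcont : Continuous β := by
    rw [continuous_iff_continuousAt]
    intro x₀
    obtain ⟨V, hVc, hVx₀⟩ := exists_compact_mem_nhds x₀
    set C : Set G := V⁻¹ * Ku with hCdef2
    have hCc : IsCompact C := hVc.inv.mul hKuc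
    obtain ⟨bC, hbCtop, hbC⟩ := hκbdd C⁻¹ hCc.inv
    set M : ℝ≥0∞ := bC * lG C with hMdef
    have hMtop : M ≠ ⊤ := ENNReal.mul_ne_top hbCtop hCc.measure_lt_top.ne
    have hmemC : ∀ x ∈ V, ∀ z : G, u' (x * z) ≠ 0 → z ∈ C := by
      intro x hx z h0
      have hmem := hu'supp _ h0
      exact ⟨x⁻¹, Set.inv_mem_inv.mpr hx, x * z, hmem, by group⟩
    have hbound : ∀ x ∈ V, Bq x ≤ M := by
      intro x hx
      rw [hzform x]
      have hle : ∀ z, u' (x * z) * κ z⁻¹ ≤ C.indicator (fun _ => bC) z := by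
        intro z
        by_cases hz : z ∈ C
        · rw [Set.indicator_of_mem hz]
          calc u' (x * z) * κ z⁻¹ ≤ 1 * κ z⁻¹ := mul_le_mul_left (hu'le1 _) _
            _ = κ z⁻¹ := one_mul _
            _ ≤ bC := hbC z⁻¹ (Set.inv_mem_inv.mpr hz)
        · rw [Set.indicator_of_notMem hz]
          rcases eq_or_ne (u' (x * z)) 0 with h0 | h0
          · rw [h0, zero_mul]
          · exact absurd (hmemC x hx z h0) hz
      calc ∫⁻ z, u' (x * z) * κ z⁻¹ ∂lG
          ≤ ∫⁻ z, C.indicator (fun _ => bC) z ∂lG := lintegral_mono hle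
        _ = bC * lG C := by
            rw [lintegral_indicator hCc.isClosed.measurableSet _, setLIntegral_const]
        _ = M := hMdef.symm
    apply Metric.tendsto_nhds.mpr
    intro ε hε
    set εδ : ℝ := ε * cR / (2 * (M.toReal + 1)) with hεδdef
    have hMtR : (0 : ℝ) ≤ M.toReal := ENNReal.toReal_nonneg
    have hεδpos : 0 < εδ := by
      rw [hεδdef]
      positivity
    obtain ⟨U₁, hU₁, hU₁unif⟩ := stmt3_aux_unif (fun z => u₀ (x₀ * z))
      (hu₀cont.comp (continuous_const.mul continuous_id))
      (hu₀supp.comp_homeomorph (Homeomorph.mulLeft x₀)) hεδpos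
    have hev1 : ∀ᶠ x in nhds x₀, x₀⁻¹ * x ∈ U₁ := by
      have hcont : Filter.Tendsto (fun x => x₀⁻¹ * x) (nhds x₀) (nhds (1 : G)) := by
        have h1 : x₀⁻¹ * x₀ = 1 := by group
        have := (continuous_mul_left x₀⁻¹).tendsto x₀
        rwa [h1] at this
      exact hcont hU₁
    have hev2 : ∀ᶠ x in nhds x₀, x ∈ V := hVx₀
    filter_upwards [hev1, hev2] with x hxU hxV
    have hx₀V : x₀ ∈ V := mem_of_mem_nhds hVx₀
    set Tx : ℝ≥0∞ := ∫⁻ z, ENNReal.ofReal |u₀ (x * z) - u₀ (x₀ * z)| * κ z⁻¹ ∂lG with hTxdef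
    have hdiffbound : ∀ z, |u₀ (x * z) - u₀ (x₀ * z)| ≤ εδ := by
      intro z
      have := hU₁unif (x₀⁻¹ * x) hxU z
      have harg : x₀ * (x₀⁻¹ * x * z) = x * z := by group
      rwa [harg] at this
    have hTxle : Tx ≤ ENNReal.ofReal εδ * M := by
      rw [hTxdef]
      have hle : ∀ z, ENNReal.ofReal |u₀ (x * z) - u₀ (x₀ * z)| * κ z⁻¹
          ≤ C.indicator (fun _ => ENNReal.ofReal εδ * bC) z := by
        intro z
        by_cases hz : z ∈ C
        · rw [Set.indicator_of_mem hz]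
          exact mul_le_mul' (ENNReal.ofReal_le_ofReal (hdiffbound z))
            (hbC z⁻¹ (Set.inv_mem_inv.mpr hz))
        · rw [Set.indicator_of_notMem hz]
          have h1 : u₀ (x * z) = 0 := by
            by_contra hcon
            refine hz (hmemC x hxV z ?_)
            rw [hu'def]
            simp only [ne_eq, ENNReal.ofReal_eq_zero, not_le]
            rcases lt_or_eq_of_le (hu₀nonneg (x * z)) with h | h
            · exact h
            · exact absurd h.symm hcon
          have h2 : u₀ (x₀ * z) = 0 := by
            by_contra hcon
            refine hz (hmemC x₀ hx₀V z ?_)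
            rw [hu'def]
            simp only [ne_eq, ENNReal.ofReal_eq_zero, not_le]
            rcases lt_or_eq_of_le (hu₀nonneg (x₀ * z)) with h | h
            · exact h
            · exact absurd h.symm hcon
          simp [h1, h2]
      calc ∫⁻ z, ENNReal.ofReal |u₀ (x * z) - u₀ (x₀ * z)| * κ z⁻¹ ∂lG
          ≤ ∫⁻ z, C.indicator (fun _ => ENNReal.ofReal εδ * bC) z ∂lG := lintegral_mono hle
        _ = ENNReal.ofReal εδ * bC * lG C := by
            rw [lintegral_indicator hCc.isClosed.measurableSet _, setLIntegral_const]
        _ = ENNReal.ofReal εδ * M := by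
            rw [hMdef, mul_assoc]
    have hκinvmeas : Measurable fun z : G => κ z⁻¹ := hκmeas.comp continuous_inv.measurable
    have hofmeas : ∀ w : G, Measurable fun z : G => ENNReal.ofReal |u₀ (w * z) - u₀ (x₀ * z)| :=
      fun w => ENNReal.measurable_ofReal.comp
        (((hu₀cont.comp (continuous_const.mul continuous_id)).sub
          (hu₀cont.comp (continuous_const.mul continuous_id))).abs).measurable
    have hPle : Bq x ≤ Bq x₀ + Tx := by
      rw [hzform x, hzform x₀, hTxdef]
      have hptle : ∀ z, u' (x * z) * κ z⁻¹
          ≤ u' (x₀ * z) * κ z⁻¹ + ENNReal.ofReal |u₀ (x * z) - u₀ (x₀ * z)| * κ z⁻¹ := by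
        intro z
        rw [← add_mul]
        apply mul_le_mul_left
        rw [hu'def]
        calc ENNReal.ofReal (u₀ (x * z))
            ≤ ENNReal.ofReal (u₀ (x₀ * z) + |u₀ (x * z) - u₀ (x₀ * z)|) := by
              apply ENNReal.ofReal_le_ofReal
              have := le_abs_self (u₀ (x * z) - u₀ (x₀ * z))
              linarith
          _ = ENNReal.ofReal (u₀ (x₀ * z)) + ENNReal.ofReal |u₀ (x * z) - u₀ (x₀ * z)| :=
              ENNReal.ofReal_add (hu₀nonneg _) (abs_nonneg _)
      calc ∫⁻ z, u' (x * z) * κ z⁻¹ ∂lG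
          ≤ ∫⁻ z, (u' (x₀ * z) * κ z⁻¹
              + ENNReal.ofReal |u₀ (x * z) - u₀ (x₀ * z)| * κ z⁻¹) ∂lG := lintegral_mono hptle
        _ = (∫⁻ z, u' (x₀ * z) * κ z⁻¹ ∂lG)
              + ∫⁻ z, ENNReal.ofReal |u₀ (x * z) - u₀ (x₀ * z)| * κ z⁻¹ ∂lG :=
            lintegral_add_left ((hu'meas.comp
              (continuous_const.mul continuous_id).measurable).mul hκinvmeas) _
    have hQle : Bq x₀ ≤ Bq x + Tx := by
      rw [hzform x, hzform x₀, hTxdef]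
      have hptle : ∀ z, u' (x₀ * z) * κ z⁻¹
          ≤ u' (x * z) * κ z⁻¹ + ENNReal.ofReal |u₀ (x * z) - u₀ (x₀ * z)| * κ z⁻¹ := by
        intro z
        rw [← add_mul]
        apply mul_le_mul_left
        rw [hu'def]
        calc ENNReal.ofReal (u₀ (x₀ * z))
            ≤ ENNReal.ofReal (u₀ (x * z) + |u₀ (x * z) - u₀ (x₀ * z)|) := by
              apply ENNReal.ofReal_le_ofReal
              have := neg_abs_le (u₀ (x * z) - u₀ (x₀ * z))
              linarith
          _ = ENNReal.ofReal (u₀ (x * z)) + ENNReal.ofReal |u₀ (x * z) - u₀ (x₀ * z)| :=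
              ENNReal.ofReal_add (hu₀nonneg _) (abs_nonneg _)
      calc ∫⁻ z, u' (x₀ * z) * κ z⁻¹ ∂lG
          ≤ ∫⁻ z, (u' (x * z) * κ z⁻¹
              + ENNReal.ofReal |u₀ (x * z) - u₀ (x₀ * z)| * κ z⁻¹) ∂lG := lintegral_mono hptle
        _ = (∫⁻ z, u' (x * z) * κ z⁻¹ ∂lG)
              + ∫⁻ z, ENNReal.ofReal |u₀ (x * z) - u₀ (x₀ * z)| * κ z⁻¹ ∂lG :=
            lintegral_add_left ((hu'meas.comp
              (continuous_const.mul continuous_id).measurable).mul hκinvmeas) _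
    have hBx : Bq x ≠ ⊤ := ne_top_of_le_ne_top hMtop (hbound x hxV)
    have hBx₀ : Bq x₀ ≠ ⊤ := ne_top_of_le_ne_top hMtop (hbound x₀ hx₀V)
    have hTxtop : Tx ≠ ⊤ :=
      ne_top_of_le_ne_top (ENNReal.mul_ne_top ENNReal.ofReal_ne_top hMtop) hTxle
    have habs : |(Bq x).toReal - (Bq x₀).toReal| ≤ Tx.toReal :=
      stmt3_abs_toReal hBx hBx₀ hTxtop hPle hQle
    have hTxR : Tx.toReal ≤ εδ * M.toReal := by
      have := ENNReal.toReal_mono (ENNReal.mul_ne_top ENNReal.ofReal_ne_top hMtop) hTxle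
      rwa [ENNReal.toReal_mul, ENNReal.toReal_ofReal hεδpos.le] at this
    rw [Real.dist_eq, hβdef]
    simp only
    rw [div_sub_div_same, abs_div, abs_of_pos hcRpos]
    calc |(Bq x).toReal - (Bq x₀).toReal| / cR ≤ (εδ * M.toReal) / cR := by
          gcongr
          exact le_trans habs hTxR
      _ < ε := by
          have heq : εδ * M.toReal / cR = ε * M.toReal / (2 * (M.toReal + 1)) := by
            rw [hεδdef]
            field_simp
          rw [heq, div_lt_iff₀ (by positivity)]
          nlinarith
  -- key estimate for property (3)
  have hkey3 : ∀ g₀ g : G,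
      (∫⁻ y, ENNReal.ofReal |u₀ (g₀ * y) - u₀ y| ∂lG) ≠ ⊤ →
      ∫ h : H, |β (g₀ * g * (h : G)) - β (g * (h : G))| ∂μH
        ≤ (∫⁻ y, ENNReal.ofReal |u₀ (g₀ * y) - u₀ y| ∂lG).toReal / cR := by
    intro g₀ g hJtop
    set D : G → ℝ≥0∞ := fun y => ENNReal.ofReal |u₀ (g₀ * y) - u₀ y| with hDdef
    have hDmeas : Measurable D := ENNReal.measurable_ofReal.comp
      (((hu₀cont.comp (continuous_const.mul continuous_id)).sub hu₀cont).abs).measurable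
    set J : ℝ≥0∞ := ∫⁻ y, D y ∂lG with hJdef
    set Pf : H → ℝ≥0∞ := fun h => ∫⁻ y, u' (g₀ * y) * κ (y⁻¹ * (g * (h : G))) ∂lG with hPfdef
    set Qf : H → ℝ≥0∞ := fun h => ∫⁻ y, u' y * κ (y⁻¹ * (g * (h : G))) ∂lG with hQfdef
    set Tf : H → ℝ≥0∞ := fun h => ∫⁻ y, D y * κ (y⁻¹ * (g * (h : G))) ∂lG with hTfdef
    have hkmeas : ∀ h : H, Measurable fun y : G => κ (y⁻¹ * (g * (h : G))) := fun h =>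
      hκmeas.comp (continuous_id.inv.mul continuous_const).measurable
    have hmeasfam : ∀ v : G → ℝ≥0∞, Measurable v →
        Measurable fun h : H => ∫⁻ y, v y * κ (y⁻¹ * (g * (h : G))) ∂lG := by
      intro v hv
      have hF : Measurable fun p : H × G => v p.2 * κ (p.2⁻¹ * (g * ((p.1 : H) : G))) := by
        apply Measurable.mul
        · exact hv.comp measurable_snd
        · refine hκmeas.comp ?_
          have hc : Continuous fun p : H × G => p.2⁻¹ * (g * ((p.1 : H) : G)) :=
            continuous_snd.inv.mul
              (continuous_const.mul (continuous_subtype_val.comp continuous_fst))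
          exact hc.measurable
      exact hF.lintegral_prod_right'
    have hu'g₀meas : Measurable fun y : G => u' (g₀ * y) :=
      hu'meas.comp (continuous_const.mul continuous_id).measurable
    have hmeasP : Measurable Pf := hmeasfam _ hu'g₀meas
    have hmeasQ : Measurable Qf := hmeasfam _ hu'meas
    have hmeasT : Measurable Tf := hmeasfam _ hDmeas
    have hintP : ∫⁻ h : H, Pf h ∂μH = cE := by
      rw [hPfdef]
      have := hgen g (fun y => u' (g₀ * y)) hu'g₀meas
      rw [this]
      rw [lintegral_mul_left_eq_self (μ := lG) u' g₀]
    have hintQ : ∫⁻ h : H, Qf h ∂μH = cE := hgen g u' hu'meas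
    have hintT : ∫⁻ h : H, Tf h ∂μH = J := hgen g D hDmeas
    have haeP : ∀ᵐ h : H ∂μH, Pf h < ⊤ := ae_lt_top hmeasP (by rw [hintP]; exact hcEtop)
    have haeQ : ∀ᵐ h : H ∂μH, Qf h < ⊤ := ae_lt_top hmeasQ (by rw [hintQ]; exact hcEtop)
    have haeT : ∀ᵐ h : H ∂μH, Tf h < ⊤ := ae_lt_top hmeasT (by rw [hintT]; exact hJtop)
    have hBqP : ∀ h : H, Bq (g₀ * g * (h : G)) = Pf h := by
      intro h
      have hself := lintegral_mul_left_eq_self (μ := lG)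
        (fun y => u' y * κ (y⁻¹ * (g₀ * g * (h : G)))) g₀
      have hBqval : Bq (g₀ * g * (h : G))
          = ∫⁻ y, u' y * κ (y⁻¹ * (g₀ * g * (h : G))) ∂lG := rfl
      rw [hBqval, ← hself, hPfdef]
      apply lintegral_congr
      intro y
      congr 2
      group
    have hBqQ : ∀ h : H, Bq (g * (h : G)) = Qf h := fun h => rfl
    have hptP : ∀ h : H, Pf h ≤ Qf h + Tf h := by
      intro h
      have hpt : ∀ y, u' (g₀ * y) * κ (y⁻¹ * (g * (h : G)))
          ≤ u' y * κ (y⁻¹ * (g * (h : G))) + D y * κ (y⁻¹ * (g * (h : G))) := by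
        intro y
        rw [← add_mul]
        apply mul_le_mul_left
        rw [hu'def, hDdef]
        calc ENNReal.ofReal (u₀ (g₀ * y))
            ≤ ENNReal.ofReal (u₀ y + |u₀ (g₀ * y) - u₀ y|) := by
              apply ENNReal.ofReal_le_ofReal
              have := le_abs_self (u₀ (g₀ * y) - u₀ y)
              linarith
          _ = ENNReal.ofReal (u₀ y) + ENNReal.ofReal |u₀ (g₀ * y) - u₀ y| :=
              ENNReal.ofReal_add (hu₀nonneg _) (abs_nonneg _)
      calc Pf h ≤ ∫⁻ y, (u' y * κ (y⁻¹ * (g * (h : G)))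
              + D y * κ (y⁻¹ * (g * (h : G)))) ∂lG := lintegral_mono hpt
        _ = Qf h + Tf h := lintegral_add_left (hu'meas.mul (hkmeas h)) _
    have hptQ : ∀ h : H, Qf h ≤ Pf h + Tf h := by
      intro h
      have hpt : ∀ y, u' y * κ (y⁻¹ * (g * (h : G)))
          ≤ u' (g₀ * y) * κ (y⁻¹ * (g * (h : G))) + D y * κ (y⁻¹ * (g * (h : G))) := by
        intro y
        rw [← add_mul]
        apply mul_le_mul_left
        rw [hu'def, hDdef]
        calc ENNReal.ofReal (u₀ y)
            ≤ ENNReal.ofReal (u₀ (g₀ * y) + |u₀ (g₀ * y) - u₀ y|) := by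
              apply ENNReal.ofReal_le_ofReal
              have := neg_abs_le (u₀ (g₀ * y) - u₀ y)
              linarith
          _ = ENNReal.ofReal (u₀ (g₀ * y)) + ENNReal.ofReal |u₀ (g₀ * y) - u₀ y| :=
              ENNReal.ofReal_add (hu₀nonneg _) (abs_nonneg _)
      calc Qf h ≤ ∫⁻ y, (u' (g₀ * y) * κ (y⁻¹ * (g * (h : G)))
              + D y * κ (y⁻¹ * (g * (h : G)))) ∂lG := lintegral_mono hpt
        _ = Pf h + Tf h := lintegral_add_left (hu'g₀meas.mul (hkmeas h)) _
    have haept : ∀ᵐ h : H ∂μH,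
        |β (g₀ * g * (h : G)) - β (g * (h : G))| ≤ (Tf h).toReal / cR := by
      filter_upwards [haeP, haeQ, haeT] with h hP hQ hT
      have h1 : β (g₀ * g * (h : G)) = (Pf h).toReal / cR := by
        show (Bq (g₀ * g * (h : G))).toReal / cR = (Pf h).toReal / cR
        rw [hBqP h]
      have h2 : β (g * (h : G)) = (Qf h).toReal / cR := by
        show (Bq (g * (h : G))).toReal / cR = (Qf h).toReal / cR
        rw [hBqQ h]
      rw [h1, h2, div_sub_div_same, abs_div, abs_of_pos hcRpos]
      gcongr
      exact stmt3_abs_toReal hP.ne hQ.ne hT.ne (hptP h) (hptQ h)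
    have hTint : Integrable (fun h : H => (Tf h).toReal / cR) μH := by
      apply Integrable.div_const
      exact integrable_toReal_of_lintegral_ne_top hmeasT.aemeasurable
        (by rw [hintT]; exact hJtop)
    calc ∫ h : H, |β (g₀ * g * (h : G)) - β (g * (h : G))| ∂μH
        ≤ ∫ h : H, (Tf h).toReal / cR ∂μH := by
          apply integral_mono_of_nonneg
          · exact Filter.Eventually.of_forall fun h => abs_nonneg _
          · exact hTint
          · exact haept
      _ = (∫ h : H, (Tf h).toReal ∂μH) / cR := integral_div _ _
      _ = J.toReal / cR := by
          rw [integral_toReal hmeasT.aemeasurable haeT, hintT]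
  refine ⟨β, hβmeas, hβnonneg, ?_, hβint, ?_⟩
  · -- property (1)
    intro K hK
    obtain ⟨Dset, hDc, hDsupp⟩ := hκsupp (Ku⁻¹ * K) (hKuc.inv.mul hK)
    have hC₂c : IsCompact (Ku * Dset) := hKuc.mul hDc
    obtain ⟨cutc, hcut1, -, hcutsupp, hcuticc⟩ :=
      exists_continuous_one_zero_of_isCompact hC₂c isClosed_empty (Set.disjoint_empty _)
    refine ⟨fun x => β x * cutc x, hβcont.mul cutc.continuous, ?_, ?_⟩
    · exact hcutsupp.mul_left
    · intro g hg
      show β g = β g * cutc g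
      by_cases hβ0 : β g = 0
      · rw [hβ0, zero_mul]
      · have hBq0 : Bq g ≠ 0 := by
          intro h0
          apply hβ0
          rw [hβdef]
          simp [h0]
        have hex : ∃ y : G, u' y ≠ 0 ∧ κ (y⁻¹ * g) ≠ 0 := by
          by_contra hco
          push_neg at hco
          apply hBq0
          have hzero : ∀ y, u' y * κ (y⁻¹ * g) = 0 := by
            intro y
            rcases eq_or_ne (u' y) 0 with h | h
            · rw [h, zero_mul]
            · rw [hco y h, mul_zero]
          have : Bq g = ∫⁻ y, (0 : ℝ≥0∞) ∂lG := lintegral_congr hzero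
          rw [this, lintegral_zero]
        obtain ⟨y, hyu, hyκ⟩ := hex
        have hyKu : y ∈ Ku := hu'supp y hyu
        have harg : y⁻¹ * g ∈ Ku⁻¹ * K * (H : Set G) := by
          rcases hg with ⟨k, hk, b, hb, rfl⟩
          exact ⟨y⁻¹ * k, Set.mul_mem_mul (Set.inv_mem_inv.mpr hyKu) hk, b, hb, by group⟩
        have hD : y⁻¹ * g ∈ Dset := hDsupp _ hyκ harg
        have hgC₂ : g ∈ Ku * Dset := ⟨y, hyKu, y⁻¹ * g, hD, by group⟩
        have hcutg : cutc g = 1 := by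
          have := hcut1 hgC₂
          simpa using this
        rw [hcutg, mul_one]
  · -- property (3)
    intro ε hε
    set C3 : Set G := Kc'⁻¹ * Ku ∪ Ku with hC3def
    have hC3c : IsCompact C3 := (hKc'c.inv.mul hKuc).union hKuc
    set lC : ℝ := (lG C3).toReal with hlCdef
    have hlCnonneg : 0 ≤ lC := ENNReal.toReal_nonneg
    set εu : ℝ := ε / 2 * cR / (lC + 1) with hεudef
    have hεupos : 0 < εu := by
      rw [hεudef]
      positivity
    obtain ⟨U₁, hU₁, hU₁unif⟩ := stmt3_aux_unif u₀ hu₀cont hu₀supp hεupos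
    refine ⟨U₁ ∩ interior Kc', Filter.inter_mem hU₁ (interior_mem_nhds.mpr hKc'), ?_⟩
    rintro g₀ ⟨hg₀U, hg₀K⟩
    have hg₀Kc' : g₀ ∈ Kc' := interior_subset hg₀K
    have hDle : ∀ y, ENNReal.ofReal |u₀ (g₀ * y) - u₀ y|
        ≤ C3.indicator (fun _ => ENNReal.ofReal εu) y := by
      intro y
      by_cases hy : y ∈ C3
      · rw [Set.indicator_of_mem hy]
        exact ENNReal.ofReal_le_ofReal (hU₁unif g₀ hg₀U y)
      · rw [Set.indicator_of_notMem hy]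
        have h1 : u₀ (g₀ * y) = 0 := by
          by_contra hcon
          have hmem : g₀ * y ∈ Ku := subset_tsupport u₀
            (by simpa [Function.mem_support] using hcon)
          exact hy (Or.inl ⟨g₀⁻¹, Set.inv_mem_inv.mpr hg₀Kc', g₀ * y, hmem, by group⟩)
        have h2 : u₀ y = 0 := by
          by_contra hcon
          exact hy (Or.inr (subset_tsupport u₀ (by simpa [Function.mem_support] using hcon)))
        simp [h1, h2]
    have hJle : (∫⁻ y, ENNReal.ofReal |u₀ (g₀ * y) - u₀ y| ∂lG)
        ≤ ENNReal.ofReal εu * lG C3 := by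
      calc (∫⁻ y, ENNReal.ofReal |u₀ (g₀ * y) - u₀ y| ∂lG)
          ≤ ∫⁻ y, C3.indicator (fun _ => ENNReal.ofReal εu) y ∂lG := lintegral_mono hDle
        _ = ENNReal.ofReal εu * lG C3 := by
            rw [lintegral_indicator hC3c.isClosed.measurableSet _, setLIntegral_const]
    have hRHStop : ENNReal.ofReal εu * lG C3 ≠ ⊤ :=
      ENNReal.mul_ne_top ENNReal.ofReal_ne_top hC3c.measure_lt_top.ne
    have hJtop : (∫⁻ y, ENNReal.ofReal |u₀ (g₀ * y) - u₀ y| ∂lG) ≠ ⊤ :=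
      ne_top_of_le_ne_top hRHStop hJle
    have hsup : ∀ g : G,
        ∫ h : H, |β (g₀ * g * (h : G)) - β (g * (h : G))| ∂μH ≤ ε / 2 := by
      intro g
      refine le_trans (hkey3 g₀ g hJtop) ?_
      have h1 : (∫⁻ y, ENNReal.ofReal |u₀ (g₀ * y) - u₀ y| ∂lG).toReal ≤ εu * lC := by
        have := ENNReal.toReal_mono hRHStop hJle
        rwa [ENNReal.toReal_mul, ENNReal.toReal_ofReal hεupos.le, ← hlCdef] at this
      rw [div_le_iff₀ hcRpos]
      refine le_trans h1 ?_
      have heq : εu * lC = ε / 2 * cR * (lC / (lC + 1)) := by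
        rw [hεudef]
        field_simp
      rw [heq]
      have hfrac : lC / (lC + 1) ≤ 1 := by
        rw [div_le_one (by linarith)]
        linarith
      nlinarith [mul_pos (half_pos hε) hcRpos]
    calc (⨆ g : G, ∫ h : H, |β (g₀ * g * (h : G)) - β (g * (h : G))| ∂μH) ≤ ε / 2 :=
          ciSup_le hsup
      _ < ε := by linarith
end

section
/- Let μ_r be a right Haar measure on G, let β₀ : G → [0,∞) be a Borel function with ∫_H β₀(xh) dμ_H(h) = 1 for every x ∈ G, and let f : G → ℝ be continuous, compactly supported, nonnegative, with ∫_G f(x⁻¹) dμ_r(x) = 1. Define β(g) := ∫_G f(gx⁻¹)·β₀(x) dμ_r(x). Then: (a) ∫_H β(gh) dμ_H(h) = 1 for every g ∈ G; and (b) for all g₀, g ∈ G, ∫_H |β(g₀gh) − β(gh)| dμ_H(h) ≤ ∫_G |f(g₀x⁻¹) − f(x⁻¹)| dμ_r(x). -/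
open MeasureTheory Function

section Aux

variable {G : Type*} [Group G] [TopologicalSpace G] [IsTopologicalGroup G]
    [LocallyCompactSpace G] [SecondCountableTopology G] [T2Space G]
    [MeasurableSpace G] [BorelSpace G]
    (H : Subgroup G)
    (μH : Measure H)
    (μr : Measure G) [IsFiniteMeasureOnCompacts μr] [μr.IsMulRightInvariant]

/-- Master lemma: product integrability and Fubini computation. -/
theorem master (hHclosed : IsClosed (H : Set G)) [μH.IsHaarMeasure]
    (β₀ : G → ℝ) (hβ₀_meas : Measurable β₀) (hβ₀_nonneg : ∀ g, 0 ≤ β₀ g)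
    (hβ₀_int : ∀ x : G, ∫ h : H, β₀ (x * (h : G)) ∂μH = 1)
    (φ : G → ℝ) (hφ_meas : Measurable φ) (hφ_nonneg : ∀ x, 0 ≤ φ x)
    (hφ_int : Integrable φ μr) (c : G) :
    Integrable (fun p : G × H => φ p.1 * β₀ (p.1 * c * (p.2 : G))) (μr.prod μH) ∧
      ∫ h : H, ∫ x, φ x * β₀ (x * c * (h : G)) ∂μr ∂μH = ∫ x, φ x ∂μr := by
  haveI : LocallyCompactSpace H := hHclosed.locallyCompactSpace
  haveI : SecondCountableTopology H :=
    inferInstanceAs (SecondCountableTopology ((H : Set G) : Type _))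
  haveI : SigmaFinite μH := sigmaFinite_of_locallyFinite
  -- integrability of the inner slice over H
  have hB_int : ∀ x : G, Integrable (fun h : H => β₀ (x * (h : G))) μH := by
    intro x
    by_contra hcon
    have := hβ₀_int x
    rw [integral_undef hcon] at this
    norm_num at this
  have hmeas : Measurable (fun p : G × H => φ p.1 * β₀ (p.1 * c * (p.2 : G))) := by
    refine (hφ_meas.comp measurable_fst).mul (hβ₀_meas.comp ?_)
    exact (measurable_fst.mul measurable_const).mul
      (measurable_subtype_coe.comp measurable_snd)
  have hint : Integrable (fun p : G × H => φ p.1 * β₀ (p.1 * c * (p.2 : G))) (μr.prod μH) := by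
    refine ⟨hmeas.aestronglyMeasurable, ?_⟩
    rw [HasFiniteIntegral, lintegral_prod _ hmeas.enorm.aemeasurable]
    have key : ∀ x : G, (∫⁻ h : H, ‖φ x * β₀ (x * c * (h : G))‖ₑ ∂μH)
        = ENNReal.ofReal (φ x) := by
      intro x
      have : ∀ h : H, ‖φ x * β₀ (x * c * (h : G))‖ₑ
          = ENNReal.ofReal (φ x) * ENNReal.ofReal (β₀ (x * c * (h : G))) := by
        intro h
        rw [Real.enorm_eq_ofReal (mul_nonneg (hφ_nonneg x) (hβ₀_nonneg _)),
          ENNReal.ofReal_mul (hφ_nonneg x)]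
      simp_rw [this]
      have hm : Measurable fun h : H => ENNReal.ofReal (β₀ (x * c * (h : G))) :=
        ENNReal.measurable_ofReal.comp (hβ₀_meas.comp
          (measurable_const.mul measurable_subtype_coe))
      rw [lintegral_const_mul _ hm,
        ← ofReal_integral_eq_lintegral_ofReal (hB_int (x * c))
          (ae_of_all _ fun h => hβ₀_nonneg _), hβ₀_int (x * c)]
      simp
    simp_rw [key]
    rw [← ofReal_integral_eq_lintegral_ofReal hφ_int (ae_of_all _ hφ_nonneg)]
    exact ENNReal.ofReal_lt_top
  refine ⟨hint, ?_⟩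
  have swap := integral_integral_swap (f := fun (x : G) (h : H) => φ x * β₀ (x * c * (h : G)))
    (μ := μr) (ν := μH) hint
  rw [← swap]
  have : ∀ x : G, ∫ h : H, φ x * β₀ (x * c * (h : G)) ∂μH = φ x := by
    intro x
    rw [integral_const_mul, hβ₀_int (x * c), mul_one]
  simp_rw [this]

end Aux

/-- Let `G` be a locally compact, second countable Hausdorff topological
group, `H ≤ G` a closed subgroup, `μ_H` a left Haar measure on `H`, `μ_r` a right Haar
measure on `G`.  Let `β₀ : G → [0,∞)` be Borel with `∫_H β₀(xh) dμ_H(h) = 1` for every `x`,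
and `f : G → ℝ` continuous, compactly supported, nonnegative, with `∫_G f(x⁻¹) dμ_r(x) = 1`.
Define `β(g) := ∫_G f(gx⁻¹)·β₀(x) dμ_r(x)`.  Then (a) `∫_H β(gh) dμ_H(h) = 1` for every
`g ∈ G`; and (b) for all `g₀, g ∈ G`,
`∫_H |β(g₀gh) − β(gh)| dμ_H(h) ≤ ∫_G |f(g₀x⁻¹) − f(x⁻¹)| dμ_r(x)`. -/
theorem stmt_4
    {G : Type*} [Group G] [TopologicalSpace G] [IsTopologicalGroup G]
    [LocallyCompactSpace G] [SecondCountableTopology G] [T2Space G]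
    [MeasurableSpace G] [BorelSpace G]
    (H : Subgroup G) (hHclosed : IsClosed (H : Set G))
    (μH : Measure H) [μH.IsHaarMeasure]
    (μr : Measure G) [IsFiniteMeasureOnCompacts μr] [μr.IsMulRightInvariant]
    [μr.IsOpenPosMeasure]
    (β₀ : G → ℝ) (hβ₀_meas : Measurable β₀) (hβ₀_nonneg : ∀ g, 0 ≤ β₀ g)
    (hβ₀_int : ∀ x : G, ∫ h : H, β₀ (x * (h : G)) ∂μH = 1)
    (f : G → ℝ) (hf_cont : Continuous f) (hf_supp : HasCompactSupport f)
    (hf_nonneg : ∀ x, 0 ≤ f x) (hf_int : ∫ x, f x⁻¹ ∂μr = 1)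
    (β : G → ℝ) (hβ : ∀ g : G, β g = ∫ x, f (g * x⁻¹) * β₀ x ∂μr) :
    (∀ g : G, ∫ h : H, β (g * (h : G)) ∂μH = 1) ∧
    (∀ g₀ g : G, ∫ h : H, |β (g₀ * g * (h : G)) - β (g * (h : G))| ∂μH
      ≤ ∫ x, |f (g₀ * x⁻¹) - f x⁻¹| ∂μr) := by
  haveI : LocallyCompactSpace H := hHclosed.locallyCompactSpace
  haveI : SecondCountableTopology H :=
    inferInstanceAs (SecondCountableTopology ((H : Set G) : Type _))
  haveI : SigmaFinite μH := sigmaFinite_of_locallyFinite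
  -- key change of variables: β (a * c) = ∫ x, f (a * x⁻¹) * β₀ (x * c) dμr
  have key : ∀ a c : G, β (a * c) = ∫ x, f (a * x⁻¹) * β₀ (x * c) ∂μr := by
    intro a c
    calc β (a * c) = ∫ x, f (a * c * x⁻¹) * β₀ x ∂μr := hβ _
      _ = ∫ x, f (a * c * (x * c)⁻¹) * β₀ (x * c) ∂μr :=
          (integral_mul_right_eq_self (fun x => f (a * c * x⁻¹) * β₀ x) c).symm
      _ = ∫ x, f (a * x⁻¹) * β₀ (x * c) ∂μr := by
          congr 1; funext x
          congr 2
          group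
  -- basic integrable functions
  have hinv : ∀ a : G, Integrable (fun x => f (a * x⁻¹)) μr := by
    intro a
    have hc : Continuous fun x : G => f (a * x⁻¹) :=
      hf_cont.comp (continuous_const.mul continuous_inv)
    have hs : HasCompactSupport fun x : G => f (a * x⁻¹) := by
      have : (fun x : G => f (a * x⁻¹)) =
          f ∘ ((Homeomorph.inv G).trans (Homeomorph.mulLeft a)) := rfl
      rw [this]
      exact hf_supp.comp_homeomorph _
    exact hc.integrable_of_hasCompactSupport hs
  have hinv1 : Integrable (fun x : G => f x⁻¹) μr := by
    simpa using hinv 1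
  -- measurability helpers
  have hminv : ∀ a : G, Measurable fun x : G => f (a * x⁻¹) := fun a =>
    (hf_cont.comp (continuous_const.mul continuous_inv)).measurable
  constructor
  · intro g
    have h1 : ∀ h : H, β (g * (h : G)) = ∫ x, f x⁻¹ * β₀ (x * g * (h : G)) ∂μr := by
      intro h
      have := key 1 (g * (h : G))
      simp only [one_mul] at this
      rw [this]
      congr 1; funext x; rw [mul_assoc]
    simp_rw [h1]
    have M := master H μH μr hHclosed β₀ hβ₀_meas hβ₀_nonneg hβ₀_int
      (fun x => f x⁻¹) (by simpa using hminv 1) (fun x => hf_nonneg _) hinv1 g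
    rw [M.2, hf_int]
  · intro g₀ g
    set Δ : G → ℝ := fun x => |f (g₀ * x⁻¹) - f x⁻¹| with hΔ
    have hΔ_meas : Measurable Δ := ((hminv g₀).sub (by simpa using hminv 1)).abs
    have hΔ_nonneg : ∀ x, 0 ≤ Δ x := fun x => abs_nonneg _
    have hΔ_int : Integrable Δ μr := ((hinv g₀).sub hinv1).abs
    -- product integrabilities
    have Ma := master H μH μr hHclosed β₀ hβ₀_meas hβ₀_nonneg hβ₀_int
      (fun x => f (g₀ * x⁻¹)) (hminv g₀) (fun x => hf_nonneg _) (hinv g₀) g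
    have Mb := master H μH μr hHclosed β₀ hβ₀_meas hβ₀_nonneg hβ₀_int
      (fun x => f x⁻¹) (by simpa using hminv 1) (fun x => hf_nonneg _) hinv1 g
    have MΔ := master H μH μr hHclosed β₀ hβ₀_meas hβ₀_nonneg hβ₀_int
      Δ hΔ_meas hΔ_nonneg hΔ_int g
    -- pointwise identities
    have ida : ∀ h : H, β (g₀ * g * (h : G)) = ∫ x, f (g₀ * x⁻¹) * β₀ (x * g * (h : G)) ∂μr := by
      intro h
      have := key g₀ (g * (h : G))
      rw [← mul_assoc] at this
      rw [this]
      congr 1; funext x; rw [mul_assoc]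
    have idb : ∀ h : H, β (g * (h : G)) = ∫ x, f x⁻¹ * β₀ (x * g * (h : G)) ∂μr := by
      intro h
      have := key 1 (g * (h : G))
      simp only [one_mul] at this
      rw [this]
      congr 1; funext x; rw [mul_assoc]
    -- a.e. bound
    have hbound : ∀ᵐ h : H ∂μH,
        |β (g₀ * g * (h : G)) - β (g * (h : G))|
          ≤ ∫ x, Δ x * β₀ (x * g * (h : G)) ∂μr := by
      filter_upwards [Ma.1.prod_left_ae, Mb.1.prod_left_ae] with h hha hhb
      rw [ida h, idb h, ← integral_sub hha hhb]
      calc |∫ x, (f (g₀ * x⁻¹) * β₀ (x * g * (h : G))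
              - f x⁻¹ * β₀ (x * g * (h : G))) ∂μr|
          ≤ ∫ x, |f (g₀ * x⁻¹) * β₀ (x * g * (h : G))
              - f x⁻¹ * β₀ (x * g * (h : G))| ∂μr := by
            simpa using norm_integral_le_integral_norm
              (fun x => f (g₀ * x⁻¹) * β₀ (x * g * (h : G))
                - f x⁻¹ * β₀ (x * g * (h : G)))
        _ = ∫ x, Δ x * β₀ (x * g * (h : G)) ∂μr := by
            congr 1; funext x
            rw [← sub_mul, abs_mul, abs_of_nonneg (hβ₀_nonneg _)]
    -- conclude
    have hRHSint : Integrable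
        (fun h : H => ∫ x, Δ x * β₀ (x * g * (h : G)) ∂μr) μH :=
      MΔ.1.integral_prod_right
    calc ∫ h : H, |β (g₀ * g * (h : G)) - β (g * (h : G))| ∂μH
        ≤ ∫ h : H, ∫ x, Δ x * β₀ (x * g * (h : G)) ∂μr ∂μH :=
          integral_mono_of_nonneg (ae_of_all _ fun h => abs_nonneg _)
            hRHSint hbound
      _ = ∫ x, Δ x ∂μr := MΔ.2
end

section
/- Let u : ℂ → ℂ be Lebesgue measurable and suppose that u((z + w)/2) = (u(z) + u(w))/2 for Lebesgue-almost every pair (z, w) ∈ ℂ × ℂ. Then there exist an ℝ-linear map T : ℂ → ℂ and a constant c ∈ ℂ such that u(z) = T(z) + c for Lebesgue-almost every z ∈ ℂ. -/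
open MeasureTheory

open Filter Pointwise

noncomputable def Dfun (u : ℂ → ℂ) : ℂ → ℂ :=
  fun hh => ((volume (Metric.ball (0:ℂ) 1)).toReal)⁻¹ •
    ∫ w in Metric.ball (0:ℂ) 1, (u (w + hh) - u w)

lemma vol_ne_zero : (volume : Measure ℂ) ≠ 0 := by
  intro h0
  have := Metric.measure_ball_pos (volume : Measure ℂ) (0:ℂ) one_pos
  rw [h0] at this
  simp at this

instance : (ae (volume : Measure ℂ)).NeBot := ae_neBot.mpr vol_ne_zero

lemma stmt10_exists_const (u : ℂ → ℂ)
    (h : ∀ᵐ p : ℂ × ℂ ∂volume, u ((p.1 + p.2) / 2) = (u p.1 + u p.2) / 2)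
    (hh : ℂ) : ∃ c : ℂ, ∀ᵐ w : ℂ ∂volume, u (w + hh) - u w = c := by
  rw [Measure.volume_eq_prod ℂ ℂ] at h
  have m1 : MeasurePreserving (fun p : ℂ × ℂ => (p.1 + hh, p.2))
      ((volume : Measure ℂ).prod volume) ((volume : Measure ℂ).prod volume) :=
    (measurePreserving_add_right volume hh).prod (MeasurePreserving.id volume)
  have m2 : MeasurePreserving (fun p : ℂ × ℂ => (p.1, p.2 + hh))
      ((volume : Measure ℂ).prod volume) ((volume : Measure ℂ).prod volume) :=
    (MeasurePreserving.id volume).prod (measurePreserving_add_right volume hh)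
  have h1 : ∀ᵐ p : ℂ × ℂ ∂(volume : Measure ℂ).prod volume,
      u ((p.1 + hh + p.2) / 2) = (u (p.1 + hh) + u p.2) / 2 :=
    m1.quasiMeasurePreserving.tendsto_ae.eventually h
  have h2 : ∀ᵐ p : ℂ × ℂ ∂(volume : Measure ℂ).prod volume,
      u ((p.1 + (p.2 + hh)) / 2) = (u p.1 + u (p.2 + hh)) / 2 :=
    m2.quasiMeasurePreserving.tendsto_ae.eventually h
  have h3 : ∀ᵐ p : ℂ × ℂ ∂(volume : Measure ℂ).prod volume,
      u (p.1 + hh) - u p.1 = u (p.2 + hh) - u p.2 := by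
    filter_upwards [h1, h2] with p e1 e2
    have : p.1 + hh + p.2 = p.1 + (p.2 + hh) := by ring
    rw [this] at e1
    rw [e1] at e2
    field_simp at e2
    linear_combination e2
  have h4 := Measure.ae_ae_of_ae_prod h3
  obtain ⟨w₀, hw₀⟩ := h4.exists
  exact ⟨u (w₀ + hh) - u w₀, by filter_upwards [hw₀] with w hw using hw.symm⟩

lemma stmt10_toReal_pos : 0 < (volume (Metric.ball (0:ℂ) 1)).toReal :=
  ENNReal.toReal_pos (Metric.measure_ball_pos volume 0 one_pos).ne'
    measure_ball_lt_top.ne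

lemma stmt10_aeD (u : ℂ → ℂ)
    (h : ∀ᵐ p : ℂ × ℂ ∂volume, u ((p.1 + p.2) / 2) = (u p.1 + u p.2) / 2)
    (hh : ℂ) : ∀ᵐ w : ℂ ∂volume, u (w + hh) - u w = Dfun u hh := by
  obtain ⟨c, hc⟩ := stmt10_exists_const u h hh
  have hDc : Dfun u hh = c := by
    unfold Dfun
    have hint : (∫ w in Metric.ball (0:ℂ) 1, (u (w + hh) - u w)) =
        ∫ _ in Metric.ball (0:ℂ) 1, c :=
      integral_congr_ae (ae_restrict_of_ae hc)
    rw [hint, setIntegral_const, measureReal_def, smul_smul,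
      inv_mul_cancel₀ stmt10_toReal_pos.ne', one_smul]
  rw [hDc]; exact hc

lemma stmt10_measD (u : ℂ → ℂ) (hu : Measurable u) : Measurable (Dfun u) := by
  have hsm : StronglyMeasurable (fun p : ℂ × ℂ => u (p.2 + p.1) - u p.2) :=
    ((hu.comp (measurable_snd.add measurable_fst)).sub
      (hu.comp measurable_snd)).stronglyMeasurable
  exact ((hsm.integral_prod_right'
    (ν := volume.restrict (Metric.ball (0:ℂ) 1))).measurable).const_smul
      ((volume (Metric.ball (0:ℂ) 1)).toReal)⁻¹

lemma stmt10_addD (u : ℂ → ℂ)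
    (h : ∀ᵐ p : ℂ × ℂ ∂volume, u ((p.1 + p.2) / 2) = (u p.1 + u p.2) / 2)
    (a b : ℂ) : Dfun u (a + b) = Dfun u a + Dfun u b := by
  have h1 := stmt10_aeD u h (a + b)
  have h2 := stmt10_aeD u h b
  have h3 : ∀ᵐ w : ℂ ∂volume, u (w + b + a) - u (w + b) = Dfun u a :=
    (measurePreserving_add_right volume b).quasiMeasurePreserving.tendsto_ae.eventually
      (stmt10_aeD u h a)
  obtain ⟨w, e1, e2, e3⟩ := (h1.and (h2.and h3)).exists
  have hw : w + (a + b) = w + b + a := by ring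
  rw [hw] at e1
  linear_combination e2 + e3 - e1

lemma stmt10_cont (D : ℂ →+ ℂ) (hmeas : Measurable D) : Continuous D := by
  obtain ⟨n, hn⟩ : ∃ n : ℕ, 0 < volume {x : ℂ | ‖D x‖ ≤ n} := by
    by_contra hcon
    push_neg at hcon
    have hsub : (Set.univ : Set ℂ) ⊆ ⋃ n : ℕ, {x : ℂ | ‖D x‖ ≤ n} := fun x _ => by
      obtain ⟨n, hn⟩ := exists_nat_ge ‖D x‖
      exact Set.mem_iUnion.2 ⟨n, hn⟩
    have h0 : volume (Set.univ : Set ℂ) = 0 := by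
      refine le_antisymm (le_trans (measure_mono hsub) (le_trans (measure_iUnion_le _) ?_)) bot_le
      have : ∀ n : ℕ, volume {x : ℂ | ‖D x‖ ≤ n} = 0 := fun n =>
        le_antisymm (hcon n) bot_le
      simp only [this, tsum_zero, le_refl]
    exact vol_ne_zero (Measure.measure_univ_eq_zero.mp h0)
  have hE : MeasurableSet {x : ℂ | ‖D x‖ ≤ n} :=
    measurableSet_le hmeas.norm measurable_const
  have hV : {x : ℂ | ‖D x‖ ≤ n} - {x : ℂ | ‖D x‖ ≤ n} ∈ nhds (0 : ℂ) :=
    Measure.sub_mem_nhds_zero_of_addHaar_pos volume _ hE hn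
  have hbound : ∀ v ∈ {x : ℂ | ‖D x‖ ≤ n} - {x : ℂ | ‖D x‖ ≤ n}, ‖D v‖ ≤ 2 * n := by
    rintro v ⟨a, ha, b, hb, rfl⟩
    rw [map_sub]
    calc ‖D a - D b‖ ≤ ‖D a‖ + ‖D b‖ := norm_sub_le _ _
    _ ≤ n + n := add_le_add ha hb
    _ = 2 * n := by ring
  have h0 : ContinuousAt D 0 := by
    rw [ContinuousAt, map_zero]
    rw [NormedAddCommGroup.tendsto_nhds_zero]
    intro ε hε
    obtain ⟨k, hk⟩ := exists_nat_gt ((2 * n + 1) / ε)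
    have hkpos : 0 < (k : ℝ) := lt_of_le_of_lt (div_nonneg (by positivity) hε.le) hk
    have hW : (fun x : ℂ => (k : ℂ) * x) ⁻¹'
        ({x : ℂ | ‖D x‖ ≤ n} - {x : ℂ | ‖D x‖ ≤ n}) ∈ nhds (0 : ℂ) := by
      apply ContinuousAt.preimage_mem_nhds (by fun_prop)
      simpa using hV
    filter_upwards [hW] with x hx
    have hDk : D ((k : ℂ) * x) = (k : ℂ) * D x := by
      have h1 : (k : ℂ) * x = (k : ℕ) • x := by simp [nsmul_eq_mul]
      have h2 : (k : ℂ) * D x = (k : ℕ) • D x := by simp [nsmul_eq_mul]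
      rw [h1, h2, map_nsmul]
    have hb := hbound _ hx
    rw [hDk] at hb
    rw [norm_mul, Complex.norm_natCast] at hb
    have : ‖D x‖ ≤ 2 * n / k := by
      rw [le_div_iff₀ hkpos]; linarith
    calc ‖D x‖ ≤ 2 * n / k := this
    _ < ε := by
        rw [div_lt_iff₀ hkpos]
        rw [div_lt_iff₀ hε] at hk
        nlinarith
  exact continuous_of_continuousAt_zero D h0

/-- Let `u : ℂ → ℂ` be Lebesgue measurable with
`u((z + w)/2) = (u(z) + u(w))/2` for Lebesgue-almost every pair `(z, w) ∈ ℂ × ℂ`.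
Then there exist an `ℝ`-linear map `T : ℂ →ₗ[ℝ] ℂ` and a constant `c ∈ ℂ` such that
`u(z) = T(z) + c` for Lebesgue-almost every `z ∈ ℂ`. -/
theorem stmt_10 (u : ℂ → ℂ) (hu : Measurable u)
    (h : ∀ᵐ p : ℂ × ℂ ∂volume, u ((p.1 + p.2) / 2) = (u p.1 + u p.2) / 2) :
    ∃ (T : ℂ →ₗ[ℝ] ℂ) (c : ℂ), ∀ᵐ z : ℂ ∂volume, u z = T z + c := by
  set DH : ℂ →+ ℂ := AddMonoidHom.mk' (Dfun u) (fun a b => stmt10_addD u h a b) with hDH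
  have hcoe : ⇑DH = Dfun u := rfl
  have hcont : Continuous DH := stmt10_cont DH (by rw [hcoe]; exact stmt10_measD u hu)
  refine ⟨(DH.toRealLinearMap hcont).toLinearMap, ?_⟩
  -- a.e. on the product: u (w + hh) = u w + D hh   (coordinates (hh, w))
  have hCmeas : MeasurableSet {p : ℂ × ℂ | u (p.2 + p.1) = u p.2 + Dfun u p.1} := by
    apply measurableSet_eq_fun
    · exact hu.comp (measurable_snd.add measurable_fst)
    · exact (hu.comp measurable_snd).add ((stmt10_measD u hu).comp measurable_fst)
  have hprod : ∀ᵐ p : ℂ × ℂ ∂(volume : Measure ℂ).prod volume,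
      u (p.2 + p.1) = u p.2 + Dfun u p.1 := by
    rw [ae_iff, ← Set.compl_setOf, Measure.measure_prod_null hCmeas.compl]
    refine Filter.Eventually.of_forall (fun hh => ?_)
    have := stmt10_aeD u h hh
    rw [ae_iff] at this
    rw [Pi.zero_apply]
    convert this using 2
    ext w
    simp only [Set.mem_preimage, Set.mem_compl_iff, Set.mem_setOf_eq]
    constructor
    · intro hw hw2; exact hw (by linear_combination hw2)
    · intro hw hw2; exact hw (by linear_combination hw2)
  have hswap : ∀ᵐ p : ℂ × ℂ ∂(volume : Measure ℂ).prod volume,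
      u (p.1 + p.2) = u p.1 + Dfun u p.2 :=
    Measure.measurePreserving_swap.quasiMeasurePreserving.tendsto_ae.eventually hprod
  obtain ⟨w₀, hw₀⟩ := (Measure.ae_ae_of_ae_prod hswap).exists
  refine ⟨u w₀ - Dfun u w₀, ?_⟩
  have hz : ∀ᵐ z : ℂ ∂volume, u (w₀ + (z + -w₀)) = u w₀ + Dfun u (z + -w₀) :=
    (measurePreserving_add_right volume (-w₀)).quasiMeasurePreserving.tendsto_ae.eventually hw₀
  filter_upwards [hz] with z hzz
  have e1 : w₀ + (z + -w₀) = z := by ring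
  rw [e1] at hzz
  have e2 : z + -w₀ = z - w₀ := by ring
  rw [e2] at hzz
  have e3 : Dfun u (z - w₀) = Dfun u z - Dfun u w₀ := by
    rw [← hcoe, map_sub]
  have e4 : ((DH.toRealLinearMap hcont).toLinearMap : ℂ → ℂ) z = Dfun u z := by
    have := AddMonoidHom.coe_toRealLinearMap DH hcont
    simp only [ContinuousLinearMap.coe_coe] at *
    rw [show ((DH.toRealLinearMap hcont) : ℂ → ℂ) z = DH z from congrFun this z, hcoe]
  rw [hzz, e3, e4]
  ring
end

section
/- Let T : ℂ → ℂ be an ℝ-linear map and suppose there exist c ∈ ℂ and r > 0 such that T maps the unit circle {z ∈ ℂ : |z| = 1} onto the circle {w ∈ ℂ : |w − c| = r}. Then c = 0 and there exists λ ∈ ℂ with |λ| = r such that either T(z) = λ·z for all z ∈ ℂ, or T(z) = λ·conj(z) for all z ∈ ℂ. -/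
/-- Let `T : ℂ → ℂ` be an `ℝ`-linear map mapping the unit circle onto
the circle `{w : |w − c| = r}` for some `c ∈ ℂ` and `r > 0`.  Then `c = 0` and there is
`λ ∈ ℂ` with `|λ| = r` such that either `T(z) = λ·z` for all `z`, or `T(z) = λ·conj(z)`
for all `z`. -/
theorem stmt_11 (T : ℂ →ₗ[ℝ] ℂ) (c : ℂ) (r : ℝ) (hr : 0 < r)
    (h : T '' {z : ℂ | ‖z‖ = 1} = {w : ℂ | ‖w - c‖ = r}) :
    c = 0 ∧ ∃ l : ℂ, ‖l‖ = r ∧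
      ((∀ z : ℂ, T z = l * z) ∨ ∀ z : ℂ, T z = l * (starRingEnd ℂ) z) := by
  have hfwd : ∀ z : ℂ, ‖z‖ = 1 → ‖T z - c‖ = r := by
    intro z hz
    have : T z ∈ {w : ℂ | ‖w - c‖ = r} := by
      rw [← h]; exact ⟨z, hz, rfl⟩
    exact this
  -- first, c = 0
  have hc : c = 0 := by
    by_contra hc
    have hm : 0 < ‖c‖ := by
      simpa [norm_pos_iff] using hc
    set m := ‖c‖ with hmdef
    have hw : ‖(c + ((r/m : ℝ) : ℂ) * c) - c‖ = r := by
      have : (c + ((r/m : ℝ) : ℂ) * c) - c = ((r/m : ℝ) : ℂ) * c := by ring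
      rw [this, norm_mul, Complex.norm_real, Real.norm_eq_abs, abs_of_pos (div_pos hr hm), ← hmdef,
        div_mul_cancel₀ _ (ne_of_gt hm)]
    obtain ⟨z, hz1, hz2⟩ : ∃ z, ‖z‖ = 1 ∧ T z = c + ((r/m : ℝ) : ℂ) * c := by
      have : (c + ((r/m : ℝ) : ℂ) * c) ∈ T '' {z : ℂ | ‖z‖ = 1} := by
        rw [h]; exact hw
      obtain ⟨z, hz, h2⟩ := this; exact ⟨z, hz, h2⟩
    have hz3 : ‖-z‖ = 1 := by simpa using hz1
    have hkey := hfwd (-z) hz3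
    rw [map_neg, hz2] at hkey
    have heq : -(c + ((r/m : ℝ) : ℂ) * c) - c = -(((2 + r/m : ℝ) : ℂ) * c) := by
      push_cast; ring
    rw [heq, norm_neg, norm_mul, Complex.norm_real, Real.norm_eq_abs, ← hmdef] at hkey
    have h2m : (0:ℝ) < 2 + r/m := by positivity
    rw [abs_of_pos h2m] at hkey
    have : (2 + r/m) * m = 2*m + r := by field_simp
    rw [this] at hkey
    linarith
  subst hc
  have hA : ∀ z : ℂ, ‖z‖ = 1 → ‖T z‖ = r := by
    intro z hz; simpa using hfwd z hz
  set p := T 1 with hp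
  set q := T Complex.I with hq
  -- T z = (z.re) * p + (z.im) * q
  have hzdecomp : ∀ z : ℂ, T z = (z.re : ℂ) * p + (z.im : ℂ) * q := by
    intro z
    have hze : z = z.re • (1:ℂ) + z.im • Complex.I := by
      simp [Complex.real_smul, Complex.re_add_im]
    conv_lhs => rw [hze]
    rw [map_add, map_smul, map_smul, Complex.real_smul, Complex.real_smul]
  set a := (p - Complex.I * q) / 2 with ha
  set b := (p + Complex.I * q) / 2 with hb
  have hT : ∀ z : ℂ, T z = a * z + b * (starRingEnd ℂ) z := by
    intro z
    rw [hzdecomp z, ha, hb]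
    have h1 := Complex.add_conj z
    have h2 := Complex.sub_conj z
    push_cast at h1 h2
    linear_combination (-(p)/2) * h1 + (Complex.I * q / 2) * h2 +
      ((z.im : ℂ) * q) * Complex.I_mul_I
  -- the three sample points
  have e1 : p.re^2 + p.im^2 = r^2 := by
    have h1 : ‖p‖ = r := by
      have := hA 1 (by simp)
      rwa [← hp] at this
    have := Complex.sq_norm p
    rw [h1, Complex.normSq_apply] at this
    nlinarith [this]
  have e2 : q.re^2 + q.im^2 = r^2 := by
    have h1 : ‖q‖ = r := by
      have := hA Complex.I (by simp)
      rwa [← hq] at this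
    have := Complex.sq_norm q
    rw [h1, Complex.normSq_apply] at this
    nlinarith [this]
  have e3 : (p.re + q.re)^2 + (p.im + q.im)^2 = 2 * r^2 := by
    have hs2 : (0:ℝ) < Real.sqrt 2 := by positivity
    have habs1I : ‖1 + Complex.I‖ = Real.sqrt 2 := by
      rw [Complex.norm_def, Complex.normSq_apply]
      norm_num
    have hzu : ‖((Real.sqrt 2)⁻¹ : ℝ) • ((1:ℂ) + Complex.I)‖ = 1 := by
      rw [Complex.real_smul, norm_mul, Complex.norm_real, Real.norm_eq_abs, habs1I,
        abs_of_pos (by positivity)]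
      field_simp
    have hTz := hA _ hzu
    rw [map_smul, map_add] at hTz
    rw [Complex.real_smul, norm_mul, Complex.norm_real, Real.norm_eq_abs, abs_of_pos (by positivity)] at hTz
    have hne : Real.sqrt 2 ≠ 0 := ne_of_gt hs2
    have hTz' : (Real.sqrt 2)⁻¹ * ‖p + q‖ = r := hTz
    have hpq : ‖p + q‖ = r * Real.sqrt 2 := by
      field_simp [hne] at hTz'
      linear_combination hTz'
    have := Complex.sq_norm (p + q)
    rw [hpq, Complex.normSq_apply] at this
    simp only [Complex.add_re, Complex.add_im] at this
    have hsq : (Real.sqrt 2)^2 = 2 := Real.sq_sqrt (by norm_num)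
    nlinarith [this, hsq]
  -- a * conj b = 0
  have huv : (p - Complex.I * q) * (starRingEnd ℂ) (p + Complex.I * q) = 0 := by
    apply Complex.ext <;>
      simp only [Complex.mul_re, Complex.mul_im, Complex.sub_re, Complex.sub_im,
        Complex.add_re, Complex.add_im, Complex.conj_re, Complex.conj_im,
        Complex.I_re, Complex.I_im, Complex.zero_re, Complex.zero_im] <;>
      nlinarith [e1, e2, e3]
  have hab : a = 0 ∨ b = 0 := by
    rcases mul_eq_zero.mp huv with h1 | h1
    · left; rw [ha, h1]; simp
    · right
      have : p + Complex.I * q = 0 := by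
        have := congrArg (starRingEnd ℂ) h1
        simpa using this
      rw [hb, this]; simp
  have habsT1 : ‖p‖ = r := by
    have := hA 1 (by simp)
    rwa [← hp] at this
  rcases hab with h1 | h1
  · -- a = 0 : T z = b * conj z
    refine ⟨rfl, b, ?_, Or.inr ?_⟩
    · have : p = b := by
        have := hT 1
        rw [h1] at this
        simpa [← hp] using this
      rw [← this]; exact habsT1
    · intro z; rw [hT z, h1]; ring
  · -- b = 0 : T z = a * z
    refine ⟨rfl, a, ?_, Or.inl ?_⟩
    · have : p = a := by
        have := hT 1
        rw [h1] at this
        simpa [← hp] using this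
      rw [← this]; exact habsT1
    · intro z; rw [hT z, h1]; ring
end

section
/- Let μ be a Borel probability measure on G in the same measure class as a left Haar measure of G, let ν be a Borel probability measure on H⧸Q, and let ν₂ be the pushforward of the product measure μ ⊗ ν ⊗ ν under the map G × (H⧸Q)² → (G⧸Q)², (g, x, y) ↦ (g·ι(x), g·ι(y)), where ι : H⧸Q → G⧸Q sends hQ to hQ. Assume that every Borel set B ⊆ (H⧸Q) × (H⧸Q) with h·B = B for every h ∈ H (diagonal action) satisfies (ν ⊗ ν)(B) = 0 or (ν ⊗ ν)(((H⧸Q)×(H⧸Q)) ∖ B) = 0. Then every Borel set A ⊆ (G⧸Q) × (G⧸Q) with g·A = A for every g ∈ G (diagonal action) satisfies ν₂(A) = 0 or ν₂(((G⧸Q)×(G⧸Q)) ∖ A) = 0. -/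
open MeasureTheory

/-- Let `G` be a locally compact second countable Hausdorff group with
closed subgroups `Q ≤ H ≤ G`, `μ` a Borel probability measure on `G` in the same measure
class as a left Haar measure, `ν` a Borel probability measure on `H⧸Q`, and `ν₂` the
pushforward of `μ ⊗ ν ⊗ ν` under `(g, x, y) ↦ (g·ι x, g·ι y)`, where `ι : H⧸Q → G⧸Q` sends
`hQ` to `hQ`.  If every Borel set `B ⊆ (H⧸Q)²` invariant under the diagonal `H`-action is
`ν ⊗ ν`-null or conull, then every Borel set `A ⊆ (G⧸Q)²` invariant under the diagonal
`G`-action is `ν₂`-null or conull. -/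
theorem stmt_12
    {G : Type*} [Group G] [TopologicalSpace G] [IsTopologicalGroup G]
    [LocallyCompactSpace G] [SecondCountableTopology G] [T2Space G]
    [MeasurableSpace G] [BorelSpace G]
    (H Q : Subgroup G) (hQH : Q ≤ H)
    (hHclosed : IsClosed (H : Set G)) (hQclosed : IsClosed (Q : Set G))
    (μ : Measure G) [IsProbabilityMeasure μ]
    (haar : Measure G) [haar.IsHaarMeasure]
    (hclass : μ ≪ haar ∧ haar ≪ μ)
    (ν : Measure (H ⧸ Q.subgroupOf H)) [IsProbabilityMeasure ν]
    (ι : (H ⧸ Q.subgroupOf H) → G ⧸ Q)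
    (hι : ∀ h : H, ι (QuotientGroup.mk h) = QuotientGroup.mk (h : G))
    (ν₂ : Measure ((G ⧸ Q) × (G ⧸ Q)))
    (hν₂ : ν₂ = Measure.map
      (fun p : G × ((H ⧸ Q.subgroupOf H) × (H ⧸ Q.subgroupOf H)) =>
        (p.1 • ι p.2.1, p.1 • ι p.2.2))
      (μ.prod (ν.prod ν)))
    (herg : ∀ B : Set ((H ⧸ Q.subgroupOf H) × (H ⧸ Q.subgroupOf H)),
      MeasurableSet B →
      (∀ h : H, (fun p : (H ⧸ Q.subgroupOf H) × (H ⧸ Q.subgroupOf H) =>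
        (h • p.1, h • p.2)) '' B = B) →
      (ν.prod ν) B = 0 ∨ (ν.prod ν) Bᶜ = 0) :
    ∀ A : Set ((G ⧸ Q) × (G ⧸ Q)), MeasurableSet A →
      (∀ g : G, (fun p : (G ⧸ Q) × (G ⧸ Q) => (g • p.1, g • p.2)) '' A = A) →
      ν₂ A = 0 ∨ ν₂ Aᶜ = 0 := by
  intro A hA hAinv
  -- membership form of invariance
  have hmem : ∀ (g : G) (p : (G ⧸ Q) × (G ⧸ Q)), (g • p.1, g • p.2) ∈ A ↔ p ∈ A := by
    intro g p
    constructor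
    · intro hp
      have := (hAinv g).le
      have h2 : ((g⁻¹ : G) • (g • p.1 : G ⧸ Q), (g⁻¹ : G) • (g • p.2 : G ⧸ Q)) ∈ A := by
        rw [← hAinv g⁻¹]
        exact ⟨(g • p.1, g • p.2), hp, rfl⟩
      simpa using h2
    · intro hp
      rw [← hAinv g]
      exact ⟨p, hp, rfl⟩
  -- the pulled-back set on (H⧸Q)²
  set S : Set ((H ⧸ Q.subgroupOf H) × (H ⧸ Q.subgroupOf H)) :=
    (fun p : (H ⧸ Q.subgroupOf H) × (H ⧸ Q.subgroupOf H) => (ι p.1, ι p.2)) ⁻¹' A with hS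
  have hιmeas : Measurable ι := by
    rw [QuotientGroup.measurable_from_quotient]
    have : (ι ∘ (QuotientGroup.mk : H → H ⧸ Q.subgroupOf H)) =
        (fun h : H => (QuotientGroup.mk (h : G) : G ⧸ Q)) := by
      funext h; exact hι h
    rw [this]
    exact QuotientGroup.measurable_coe.comp measurable_subtype_coe
  have hSmeas : MeasurableSet S :=
    ((hιmeas.comp measurable_fst).prodMk (hιmeas.comp measurable_snd)) hA
  -- ι is equivariant
  have hequiv : ∀ (h : H) (x : H ⧸ Q.subgroupOf H), ι (h • x) = (h : G) • ι x := by
    intro h x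
    induction x using QuotientGroup.induction_on with
    | H h' =>
      have h1 : h • (QuotientGroup.mk h' : H ⧸ Q.subgroupOf H) = QuotientGroup.mk (h * h') := rfl
      have h2 : (h : G) • (QuotientGroup.mk (h' : G) : G ⧸ Q) =
          QuotientGroup.mk ((h : G) * (h' : G)) := rfl
      rw [h1, hι, hι, h2]
      norm_num
  -- S is H-invariant
  have hSinv : ∀ h : H, (fun p : (H ⧸ Q.subgroupOf H) × (H ⧸ Q.subgroupOf H) =>
      (h • p.1, h • p.2)) '' S = S := by
    intro h
    ext p
    constructor
    · rintro ⟨q, hq, rfl⟩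
      simp only [hS, Set.mem_preimage] at hq ⊢
      rw [hequiv, hequiv]
      exact (hmem (h : G) (ι q.1, ι q.2)).mpr hq
    · intro hp
      refine ⟨(h⁻¹ • p.1, h⁻¹ • p.2), ?_, by simp⟩
      simp only [hS, Set.mem_preimage] at hp ⊢
      rw [hequiv, hequiv]
      have := (hmem ((h⁻¹ : H) : G) (ι p.1, ι p.2)).mpr hp
      exact this
  -- preimage computation
  set T : G × ((H ⧸ Q.subgroupOf H) × (H ⧸ Q.subgroupOf H)) → (G ⧸ Q) × (G ⧸ Q) :=
    fun p => (p.1 • ι p.2.1, p.1 • ι p.2.2) with hT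
  have hpre : T ⁻¹' A = Set.univ ×ˢ S := by
    ext ⟨g, x, y⟩
    simp only [Set.mem_preimage, Set.mem_prod, Set.mem_univ, true_and, hT, hS]
    exact hmem g (ι x, ι y)
  by_cases hTm : AEMeasurable T (μ.prod (ν.prod ν))
  · have hA2 : ν₂ A = (ν.prod ν) S := by
      rw [hν₂, Measure.map_apply_of_aemeasurable hTm hA, hpre, Measure.prod_prod]
      simp
    have hAc : ν₂ Aᶜ = (ν.prod ν) Sᶜ := by
      have hcompl : ((Set.univ : Set G) ×ˢ S)ᶜ = (Set.univ : Set G) ×ˢ Sᶜ := by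
        ext ⟨a, b⟩; simp
      rw [hν₂, Measure.map_apply_of_aemeasurable hTm hA.compl, Set.preimage_compl, hpre,
        hcompl, Measure.prod_prod]
      simp
    rcases herg S hSmeas hSinv with h0 | h0
    · exact Or.inl (by rw [hA2]; exact h0)
    · exact Or.inr (by rw [hAc]; exact h0)
  · left
    rw [hν₂, Measure.map_of_not_aemeasurable hTm]
    rfl
end
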